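/- arXiv:1104.2687 — 4 statements merged into one kernel-verified Lean document; each statement's English description precedes it below -/
import Mathlib

section
/- Let A be an n×n zero-one matrix such that all entries of A^p are positive for some p ≥ 1, let P be a Markov matrix compatible with A, v a stationary probability vector for P, and μ_P the associated two-sided Markov measure on {1,…,n}^ℤ. Then the left shift σ is mixing with respect to μ_P: for all measurable sets B, C ⊆ {1,…,n}^ℤ, lim_{k→∞} μ_P(B ∩ σ^{−k}(C)) = μ_P(B)·μ_P(C). -/
open Finset

section PF
variable {n : ℕ} (P : Matrix (Fin n) (Fin n) ℝ)

lemma aux_pow_nonneg (hP : ∀ i j, 0 ≤ P i j) : ∀ m i j, 0 ≤ (P ^ m) i j := by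
  intro m
  induction m with
  | zero =>
    intro i j
    rw [pow_zero, Matrix.one_apply]
    split <;> norm_num
  | succ m ih =>
    intro i j
    rw [pow_succ, Matrix.mul_apply]
    exact Finset.sum_nonneg fun k _ => mul_nonneg (ih i k) (hP k j)

lemma aux_pow_row_sum (hP : ∀ i, ∑ j, P i j = 1) : ∀ m i, ∑ j, (P ^ m) i j = 1 := by
  intro m
  induction m with
  | zero =>
    intro i
    simp [Matrix.one_apply]
  | succ m ih =>
    intro i
    simp only [pow_succ, Matrix.mul_apply]
    rw [Finset.sum_comm]
    have : ∀ k : Fin n, ∑ j, (P ^ m) i k * P k j = (P ^ m) i k := by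
      intro k
      rw [← Finset.mul_sum, hP k, mul_one]
    rw [Finset.sum_congr rfl fun k _ => this k, ih i]

lemma aux_pow_pos (A : Matrix (Fin n) (Fin n) ℝ) (hA : ∀ i j, A i j = 0 ∨ A i j = 1)
    (hP0 : ∀ i j, 0 ≤ P i j)
    (hPA : ∀ i j, 0 < P i j ↔ A i j = 1) :
    ∀ m i j, 0 < (A ^ m) i j → 0 < (P ^ m) i j := by
  have hA0 : ∀ i j, 0 ≤ A i j := fun i j => by rcases hA i j with h | h <;> simp [h]
  intro m
  induction m with
  | zero => simp
  | succ m ih =>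
    intro i j h
    rw [pow_succ, Matrix.mul_apply] at h ⊢
    have : ∃ k ∈ Finset.univ, 0 < (A ^ m) i k * A k j := by
      by_contra hc
      push_neg at hc
      have : ∑ k, (A ^ m) i k * A k j ≤ 0 := Finset.sum_nonpos fun k hk => hc k hk
      linarith
    obtain ⟨k, -, hk⟩ := this
    have h1 : 0 < (A ^ m) i k := by
      rcases mul_pos_iff.mp hk with ⟨h, _⟩ | ⟨_, h⟩
      · exact h
      · exact absurd h (not_lt.mpr (hA0 k j))
    have h2 : 0 < A k j := by
      rcases mul_pos_iff.mp hk with ⟨_, h⟩ | ⟨h, _⟩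
      · exact h
      · exact absurd h (not_lt.mpr (aux_pow_nonneg A hA0 m i k))
    have hP2 : 0 < P k j := by
      refine (hPA k j).mpr ?_
      rcases hA k j with h | h
      · exfalso; rw [h] at h2; linarith
      · exact h
    exact Finset.sum_pos' (fun l _ => mul_nonneg (aux_pow_nonneg P hP0 m i l) (hP0 l j))
      ⟨k, Finset.mem_univ k, mul_pos (ih i k h1) hP2⟩

end PF

open Finset Filter

lemma aux_PF {n : ℕ} (P : Matrix (Fin n) (Fin n) ℝ) (hn : 1 ≤ n)
    (hP0 : ∀ i j, 0 ≤ P i j) (hP1 : ∀ i, ∑ j, P i j = 1)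
    (p : ℕ) (hp : 1 ≤ p) (hQpos : ∀ i j, 0 < (P ^ p) i j)
    (v : Fin n → ℝ) (hv0 : ∀ i, 0 < v i) (hv1 : ∑ i, v i = 1)
    (hvs : ∀ j, ∑ i, v i * P i j = v j) :
    ∀ i j, Filter.Tendsto (fun m => (P ^ m) i j) Filter.atTop (nhds (v j)) := by
  haveI : NeZero n := ⟨by omega⟩
  have ne : (Finset.univ : Finset (Fin n)).Nonempty := Finset.univ_nonempty
  have nep : (Finset.univ : Finset (Fin n × Fin n)).Nonempty := Finset.univ_nonempty
  set Q := P ^ p with hQdef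
  set δ : ℝ := min (Finset.univ.inf' nep fun q : Fin n × Fin n => Q q.1 q.2) (1 / 2) with hδdef
  have hδpos : 0 < δ := by
    refine lt_min ?_ (by norm_num)
    rw [Finset.lt_inf'_iff]
    exact fun q _ => hQpos q.1 q.2
  have hδle : ∀ i j, δ ≤ Q i j := fun i j =>
    le_trans (min_le_left _ _) (Finset.inf'_le _ (Finset.mem_univ (i, j)))
  set c : ℝ := 1 - 2 * δ with hcdef
  have hc0 : 0 ≤ c := by
    have : δ ≤ 1 / 2 := min_le_right _ _
    simp only [hcdef]; linarith
  have hc1 : c < 1 := by simp only [hcdef]; linarith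
  -- oscillation bound for a stochastic matrix with entries ≥ δ₀
  have bound : ∀ M : Matrix (Fin n) (Fin n) ℝ, (∀ i j, 0 ≤ M i j) → (∀ i, ∑ j, M i j = 1) →
      ∀ δ₀ : ℝ, (∀ i j, δ₀ ≤ M i j) → ∀ (x : Fin n → ℝ) i,
      M.mulVec x i ≤ Finset.univ.sup' ne x - δ₀ * (Finset.univ.sup' ne x - Finset.univ.inf' ne x)
      ∧ Finset.univ.inf' ne x + δ₀ * (Finset.univ.sup' ne x - Finset.univ.inf' ne x)
          ≤ M.mulVec x i := by
    intro M hM0 hM1 δ₀ hδ₀ x i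
    set S := Finset.univ.sup' ne x with hS
    set I := Finset.univ.inf' ne x with hI
    have hIS : I ≤ S := le_trans (Finset.inf'_le _ (Finset.mem_univ (Classical.arbitrary (Fin n))))
      (Finset.le_sup' _ (Finset.mem_univ _))
    obtain ⟨k0, -, hk0⟩ := Finset.exists_mem_eq_inf' ne x
    obtain ⟨k1, -, hk1⟩ := Finset.exists_mem_eq_sup' ne x
    have hmv : M.mulVec x i = ∑ j, M i j * x j := rfl
    have hxS : ∀ j, x j ≤ S := fun j => Finset.le_sup' _ (Finset.mem_univ j)
    have hxI : ∀ j, I ≤ x j := fun j => Finset.inf'_le _ (Finset.mem_univ j)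
    constructor
    · have e1 : S - M.mulVec x i = ∑ j, M i j * (S - x j) := by
        rw [hmv]
        have : ∑ j, M i j * (S - x j) = (∑ j, M i j) * S - ∑ j, M i j * x j := by
          rw [Finset.sum_mul, ← Finset.sum_sub_distrib]
          exact Finset.sum_congr rfl fun j _ => by ring
        rw [this, hM1 i, one_mul]
      have e2 : δ₀ * (S - I) ≤ ∑ j, M i j * (S - x j) := by
        have h1 : M i k0 * (S - x k0) ≤ ∑ j, M i j * (S - x j) :=
          Finset.single_le_sum (f := fun j => M i j * (S - x j))
            (fun j _ => mul_nonneg (hM0 i j) (by linarith [hxS j])) (Finset.mem_univ k0)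
        have hxk0 : x k0 = I := (hI.trans hk0).symm
        have h2 : δ₀ * (S - I) ≤ M i k0 * (S - x k0) := by
          rw [hxk0]
          exact mul_le_mul_of_nonneg_right (hδ₀ i k0) (by linarith)
        linarith
      linarith
    · have e1 : M.mulVec x i - I = ∑ j, M i j * (x j - I) := by
        rw [hmv]
        have : ∑ j, M i j * (x j - I) = ∑ j, M i j * x j - (∑ j, M i j) * I := by
          rw [Finset.sum_mul, ← Finset.sum_sub_distrib]
          exact Finset.sum_congr rfl fun j _ => by ring
        rw [this, hM1 i, one_mul]
      have e2 : δ₀ * (S - I) ≤ ∑ j, M i j * (x j - I) := by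
        have h1 : M i k1 * (x k1 - I) ≤ ∑ j, M i j * (x j - I) :=
          Finset.single_le_sum (f := fun j => M i j * (x j - I))
            (fun j _ => mul_nonneg (hM0 i j) (by linarith [hxI j])) (Finset.mem_univ k1)
        have hxk1 : x k1 = S := (hS.trans hk1).symm
        have h2 : δ₀ * (S - I) ≤ M i k1 * (x k1 - I) := by
          rw [hxk1]
          exact mul_le_mul_of_nonneg_right (hδ₀ i k1) (by linarith)
        linarith
      linarith
  have hQ0 : ∀ i j, 0 ≤ Q i j := fun i j => aux_pow_nonneg P hP0 p i j
  have hQ1 : ∀ i, ∑ j, Q i j = 1 := fun i => aux_pow_row_sum P hP1 p i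
  -- oscillation contraction under Q^q
  have osc_pow : ∀ (q : ℕ) (x : Fin n → ℝ),
      Finset.univ.sup' ne ((Q ^ q).mulVec x) - Finset.univ.inf' ne ((Q ^ q).mulVec x)
        ≤ c ^ q * (Finset.univ.sup' ne x - Finset.univ.inf' ne x) := by
    intro q
    induction q with
    | zero => intro x; simp [Matrix.one_mulVec]
    | succ q ih =>
      intro x
      set y := (Q ^ q).mulVec x with hy
      have hstep : (Q ^ (q + 1)).mulVec x = Q.mulVec y := by
        rw [hy, Matrix.mulVec_mulVec, ← pow_succ']
      rw [hstep]
      have hub : Finset.univ.sup' ne (Q.mulVec y)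
          ≤ Finset.univ.sup' ne y - δ * (Finset.univ.sup' ne y - Finset.univ.inf' ne y) :=
        Finset.sup'_le _ _ fun i _ => (bound Q hQ0 hQ1 δ hδle y i).1
      have hlb : Finset.univ.inf' ne y + δ * (Finset.univ.sup' ne y - Finset.univ.inf' ne y)
          ≤ Finset.univ.inf' ne (Q.mulVec y) :=
        Finset.le_inf' _ _ fun i _ => (bound Q hQ0 hQ1 δ hδle y i).2
      have ho := ih x
      rw [← hy] at ho
      have : Finset.univ.sup' ne (Q.mulVec y) - Finset.univ.inf' ne (Q.mulVec y)
          ≤ c * (Finset.univ.sup' ne y - Finset.univ.inf' ne y) := by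
        simp only [hcdef]; linarith
      calc Finset.univ.sup' ne (Q.mulVec y) - Finset.univ.inf' ne (Q.mulVec y)
          ≤ c * (Finset.univ.sup' ne y - Finset.univ.inf' ne y) := this
        _ ≤ c * (c ^ q * (Finset.univ.sup' ne x - Finset.univ.inf' ne x)) :=
            mul_le_mul_of_nonneg_left ho hc0
        _ = c ^ (q + 1) * (Finset.univ.sup' ne x - Finset.univ.inf' ne x) := by ring
  -- stationarity for powers
  have hvsm : ∀ m j, ∑ i, v i * (P ^ m) i j = v j := by
    intro m
    induction m with
    | zero => intro j; simp [Matrix.one_apply, mul_ite]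
    | succ m ih =>
      intro j
      simp only [pow_succ, Matrix.mul_apply, Finset.mul_sum]
      rw [Finset.sum_comm]
      have : ∀ k, ∑ i, v i * ((P ^ m) i k * P k j) = v k * P k j := by
        intro k
        rw [show (∑ i, v i * ((P ^ m) i k * P k j)) = (∑ i, v i * (P ^ m) i k) * P k j by
          rw [Finset.sum_mul]; exact Finset.sum_congr rfl fun i _ => by ring, ih k]
      rw [Finset.sum_congr rfl fun k _ => this k, hvs j]
  -- entries of powers lie in [0,1]
  have hle1 : ∀ m i j, (P ^ m) i j ≤ 1 := by
    intro m i j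
    calc (P ^ m) i j ≤ ∑ l, (P ^ m) i l :=
          Finset.single_le_sum (fun l _ => aux_pow_nonneg P hP0 m i l) (Finset.mem_univ j)
      _ = 1 := aux_pow_row_sum P hP1 m i
  -- key quantitative bound
  have key : ∀ (m : ℕ) (i j : Fin n), |(P ^ m) i j - v j| ≤ c ^ (m / p) := by
    intro m i j
    set q := m / p with hq
    set r := m % p with hr
    have hm : P ^ m = Q ^ q * P ^ r := by
      rw [hQdef, ← pow_mul, ← pow_add]
      congr 1
      rw [hq, hr]
      exact (Nat.div_add_mod m p).symm
    set y : Fin n → ℝ := (P ^ r).mulVec (Pi.single j 1) with hy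
    set z : Fin n → ℝ := (Q ^ q).mulVec y with hz
    have hcol : ∀ i', z i' = (P ^ m) i' j := by
      intro i'
      rw [hz, hy, Matrix.mulVec_mulVec, ← hm, Matrix.mulVec_single]
      simp
    have hosc : Finset.univ.sup' ne z - Finset.univ.inf' ne z ≤ c ^ q * 1 := by
      refine le_trans (osc_pow q y) (mul_le_mul_of_nonneg_left ?_ (pow_nonneg hc0 q))
      have h1 : Finset.univ.sup' ne y ≤ 1 := Finset.sup'_le _ _ fun i' _ => by
        rw [hy, Matrix.mulVec_single]; simpa using hle1 r i' j
      have h2 : (0 : ℝ) ≤ Finset.univ.inf' ne y := Finset.le_inf' _ _ fun i' _ => by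
        rw [hy, Matrix.mulVec_single]; simpa using aux_pow_nonneg P hP0 r i' j
      linarith
    -- v j lies between inf z and sup z
    have hvub : v j ≤ Finset.univ.sup' ne z := by
      have : v j = ∑ i', v i' * z i' := by
        rw [← hvsm m j]; exact Finset.sum_congr rfl fun i' _ => by rw [hcol i']
      rw [this]
      calc ∑ i', v i' * z i' ≤ ∑ i', v i' * Finset.univ.sup' ne z :=
            Finset.sum_le_sum fun i' _ => mul_le_mul_of_nonneg_left
              (Finset.le_sup' _ (Finset.mem_univ i')) (hv0 i').le
        _ = Finset.univ.sup' ne z := by rw [← Finset.sum_mul, hv1, one_mul]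
    have hvlb : Finset.univ.inf' ne z ≤ v j := by
      have : v j = ∑ i', v i' * z i' := by
        rw [← hvsm m j]; exact Finset.sum_congr rfl fun i' _ => by rw [hcol i']
      rw [this]
      calc Finset.univ.inf' ne z = ∑ i', v i' * Finset.univ.inf' ne z := by
            rw [← Finset.sum_mul, hv1, one_mul]
        _ ≤ ∑ i', v i' * z i' := Finset.sum_le_sum fun i' _ =>
            mul_le_mul_of_nonneg_left (Finset.inf'_le _ (Finset.mem_univ i')) (hv0 i').le
    have hzi : Finset.univ.inf' ne z ≤ (P ^ m) i j ∧ (P ^ m) i j ≤ Finset.univ.sup' ne z := by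
      rw [← hcol i]
      exact ⟨Finset.inf'_le _ (Finset.mem_univ i), Finset.le_sup' _ (Finset.mem_univ i)⟩
    rw [abs_sub_le_iff]
    constructor <;> [skip; skip] <;> nlinarith [hzi.1, hzi.2, hvub, hvlb, hosc]
  -- conclude
  intro i j
  have hdiv : Filter.Tendsto (fun m : ℕ => m / p) Filter.atTop Filter.atTop := by
    refine Filter.tendsto_atTop_atTop.mpr fun b => ⟨b * p, fun m hm => ?_⟩
    exact (Nat.le_div_iff_mul_le (by omega)).mpr hm
  have h0 : Filter.Tendsto (fun m : ℕ => c ^ (m / p)) Filter.atTop (nhds 0) :=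
    (tendsto_pow_atTop_nhds_zero_of_lt_one hc0 hc1).comp hdiv
  have hdiff : Filter.Tendsto (fun m => (P ^ m) i j - v j) Filter.atTop (nhds 0) :=
    squeeze_zero_norm (fun m => key m i j) h0
  have := hdiff.add_const (v j)
  simpa using this

open Finset MeasureTheory

variable {n : ℕ}

def Cyl (a b : ℤ) (w : ℤ → Fin n) : Set (ℤ → Fin n) :=
  {ω | ∀ i : ℤ, a ≤ i → i ≤ b → ω i = w i}

lemma measurableSet_Cyl (a b : ℤ) (w : ℤ → Fin n) : MeasurableSet (Cyl a b w) := by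
  have : Cyl a b w =
      ⋂ (i : ℤ) (_ : a ≤ i) (_ : i ≤ b), (fun ω : ℤ → Fin n => ω i) ⁻¹' {w i} := by
    ext ω
    simp [Cyl]
  rw [this]
  exact MeasurableSet.iInter fun i => MeasurableSet.iInter fun _ => MeasurableSet.iInter fun _ =>
    (measurable_pi_apply i) (measurableSet_singleton _)

def shiftM (n : ℕ) : (ℤ → Fin n) → (ℤ → Fin n) := fun ω i => ω (i + 1)

lemma measurable_shiftM : Measurable (shiftM n) :=
  measurable_pi_lambda _ fun i => measurable_pi_apply (i + 1)

lemma shift_iterate_apply : ∀ (k : ℕ) (ω : ℤ → Fin n) (i : ℤ),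
    (shiftM n)^[k] ω i = ω (i + k) := by
  intro k
  induction k with
  | zero => intro ω i; simp
  | succ k ih =>
    intro ω i
    rw [Function.iterate_succ_apply, ih (shiftM n ω) i]
    show ω (i + k + 1) = ω (i + (k + 1 : ℕ))
    congr 1
    push_cast
    ring

lemma shift_preimage_Cyl (k : ℕ) (c d : ℤ) (u : ℤ → Fin n) :
    (shiftM n)^[k] ⁻¹' Cyl c d u = Cyl (c + k) (d + k) (fun j => u (j - k)) := by
  ext ω
  simp only [Set.mem_preimage, Cyl, Set.mem_setOf_eq, shift_iterate_apply]
  constructor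
  · intro h i h1 h2
    have := h (i - k) (by omega) (by omega)
    rw [sub_add_cancel] at this
    exact this
  · intro h i h1 h2
    have := h (i + k) (by omega) (by omega)
    simpa using this

lemma iter_inv (μ : Measure (ℤ → Fin n))
    (hinv : ∀ s : Set (ℤ → Fin n), MeasurableSet s → μ (shiftM n ⁻¹' s) = μ s) :
    ∀ (k : ℕ) (s : Set (ℤ → Fin n)), MeasurableSet s → μ ((shiftM n)^[k] ⁻¹' s) = μ s := by
  intro k
  induction k with
  | zero => intro s _; simp
  | succ k ih =>
    intro s hs
    rw [Function.iterate_succ', Set.preimage_comp, ih _ (measurable_shiftM hs), hinv s hs]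

lemma gap_measure (P : Matrix (Fin n) (Fin n) ℝ) (v : Fin n → ℝ)
    (hP0 : ∀ i j, 0 ≤ P i j) (hv0 : ∀ i, 0 < v i)
    (μ : Measure (ℤ → Fin n))
    (hcyl : ∀ n₂ n₁ : ℤ, n₂ ≤ n₁ → ∀ w : ℤ → Fin n,
      μ (Cyl n₂ n₁ w) =
        ENNReal.ofReal (v (w n₂) * ∏ i ∈ Finset.Ico n₂ n₁, P (w i) (w (i + 1)))) :
    ∀ (m : ℕ) (a b c d : ℤ), a ≤ b → c = b + 1 + m → c ≤ d → ∀ w u : ℤ → Fin n,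
      μ (Cyl a b w ∩ Cyl c d u) =
        ENNReal.ofReal (v (w a) * (∏ i ∈ Finset.Ico a b, P (w i) (w (i + 1))) *
          (P ^ (m + 1)) (w b) (u c) * ∏ i ∈ Finset.Ico c d, P (u i) (u (i + 1))) := by
  intro m
  induction m with
  | zero =>
    intro a b c d hab hc hcd w u
    have hc' : c = b + 1 := by push_cast at hc; omega
    subst hc'
    set g : ℤ → Fin n := fun i => if i ≤ b then w i else u i with hg
    have hset : Cyl a b w ∩ Cyl (b + 1) d u = Cyl a d g := by
      ext ω
      simp only [Set.mem_inter_iff, Cyl, Set.mem_setOf_eq]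
      constructor
      · rintro ⟨h1, h2⟩ i hai hid
        by_cases hib : i ≤ b
        · rw [hg]; simp only [hib, if_true]; exact h1 i hai hib
        · rw [hg]; simp only [hib, if_false]; exact h2 i (by omega) hid
      · intro h
        constructor
        · intro i hai hib
          have := h i hai (by omega)
          rw [hg] at this; simpa [hib] using this
        · intro i hbi hid
          have := h i (by omega) hid
          rw [hg] at this
          simpa [show ¬ i ≤ b by omega] using this
    rw [hset, hcyl a d (by omega) g]
    congr 1
    have hga : g a = w a := by rw [hg]; simp [hab]
    have hsplit : Finset.Ico a d = Finset.Ico a (b + 1) ∪ Finset.Ico (b + 1) d :=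
      (Finset.Ico_union_Ico_eq_Ico (by omega) (by omega)).symm
    have hins : Finset.Ico a (b + 1) = insert b (Finset.Ico a b) := by
      ext x; simp only [Finset.mem_Ico, Finset.mem_insert]; omega
    rw [hga, hsplit, Finset.prod_union (Finset.Ico_disjoint_Ico_consecutive a (b + 1) d),
      hins, Finset.prod_insert (by simp [Finset.mem_Ico])]
    have e1 : ∀ i ∈ Finset.Ico a b, P (g i) (g (i + 1)) = P (w i) (w (i + 1)) := by
      intro i hi
      simp only [Finset.mem_Ico] at hi
      rw [hg]
      simp [show i ≤ b by omega, show i + 1 ≤ b by omega]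
    have e2 : ∀ i ∈ Finset.Ico (b + 1) d, P (g i) (g (i + 1)) = P (u i) (u (i + 1)) := by
      intro i hi
      simp only [Finset.mem_Ico] at hi
      rw [hg]
      simp [show ¬ i ≤ b by omega, show ¬ i + 1 ≤ b by omega]
    have e3 : P (g b) (g (b + 1)) = P (w b) (u (b + 1)) := by
      rw [hg]; simp
    rw [Finset.prod_congr rfl e1, Finset.prod_congr rfl e2, e3, pow_one]
    ring
  | succ m ih =>
    intro a b c d hab hc hcd w u
    have hc' : c = (b + 1) + 1 + (m : ℤ) := by push_cast at hc ⊢; omega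
    set T : ℝ := ∏ i ∈ Finset.Ico c d, P (u i) (u (i + 1)) with hT
    have hT0 : 0 ≤ T := Finset.prod_nonneg fun i _ => hP0 _ _
    have hdecomp : Cyl a b w ∩ Cyl c d u =
        ⋃ x : Fin n, (Cyl a (b + 1) (Function.update w (b + 1) x) ∩ Cyl c d u) := by
      ext ω
      simp only [Set.mem_iUnion, Set.mem_inter_iff, Cyl, Set.mem_setOf_eq]
      constructor
      · rintro ⟨h1, h2⟩
        refine ⟨ω (b + 1), ⟨?_, h2⟩⟩
        intro i hai hib
        by_cases hib' : i = b + 1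
        · subst hib'; rw [Function.update_self]
        · rw [Function.update_of_ne hib']
          exact h1 i hai (by omega)
      · rintro ⟨x, h1, h2⟩
        refine ⟨?_, h2⟩
        intro i hai hib
        have := h1 i hai (by omega)
        rwa [Function.update_of_ne (by omega)] at this
    have hdisj : Pairwise (Function.onFun Disjoint fun x : Fin n =>
        Cyl a (b + 1) (Function.update w (b + 1) x) ∩ Cyl c d u) := by
      intro x y hxy
      simp only [Function.onFun, Set.disjoint_left]
      rintro ω ⟨h1, -⟩ ⟨h2, -⟩
      have e1 := h1 (b + 1) (by omega) le_rfl
      have e2 := h2 (b + 1) (by omega) le_rfl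
      rw [Function.update_self] at e1 e2
      exact hxy (by rw [← e1, ← e2])
    rw [hdecomp, measure_iUnion hdisj fun x =>
      (measurableSet_Cyl _ _ _).inter (measurableSet_Cyl _ _ _), tsum_fintype]
    have hterm : ∀ x : Fin n,
        μ (Cyl a (b + 1) (Function.update w (b + 1) x) ∩ Cyl c d u) =
        ENNReal.ofReal (v (w a) * (∏ i ∈ Finset.Ico a b, P (w i) (w (i + 1))) *
          (P (w b) x * (P ^ (m + 1)) x (u c)) * T) := by
      intro x
      rw [ih a (b + 1) c d (by omega) hc' hcd (Function.update w (b + 1) x) u]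
      congr 1
      have hwa : Function.update w (b + 1) x a = w a := Function.update_of_ne (by omega) _ _
      have hwb : Function.update w (b + 1) x (b + 1) = x := Function.update_self _ _ _
      have hins : Finset.Ico a (b + 1) = insert b (Finset.Ico a b) := by
        ext y; simp only [Finset.mem_Ico, Finset.mem_insert]; omega
      rw [hwa, hwb, hins, Finset.prod_insert (by simp [Finset.mem_Ico])]
      have e1 : ∀ i ∈ Finset.Ico a b,
          P (Function.update w (b + 1) x i) (Function.update w (b + 1) x (i + 1)) =
          P (w i) (w (i + 1)) := by
        intro i hi
        simp only [Finset.mem_Ico] at hi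
        rw [Function.update_of_ne (by omega), Function.update_of_ne (by omega)]
      have e2 : Function.update w (b + 1) x b = w b := Function.update_of_ne (by omega) _ _
      rw [Finset.prod_congr rfl e1, e2, hwb]
      ring
    rw [Finset.sum_congr rfl fun x _ => hterm x]
    rw [← ENNReal.ofReal_sum_of_nonneg (fun x _ =>
      mul_nonneg (mul_nonneg (mul_nonneg (hv0 (w a)).le
        (Finset.prod_nonneg fun i _ => hP0 _ _))
        (mul_nonneg (hP0 _ _) (aux_pow_nonneg P hP0 (m + 1) x (u c)))) hT0)]
    congr 1
    have : ∑ x : Fin n, v (w a) * (∏ i ∈ Finset.Ico a b, P (w i) (w (i + 1))) *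
        (P (w b) x * (P ^ (m + 1)) x (u c)) * T =
        v (w a) * (∏ i ∈ Finset.Ico a b, P (w i) (w (i + 1))) *
        (∑ x : Fin n, P (w b) x * (P ^ (m + 1)) x (u c)) * T := by
      rw [Finset.mul_sum, Finset.sum_mul]
    rw [this]
    have hpow : ∑ x : Fin n, P (w b) x * (P ^ (m + 1)) x (u c) =
        (P ^ (m + 1 + 1)) (w b) (u c) := by
      conv_rhs => rw [pow_succ']
      rw [Matrix.mul_apply]
    rw [hpow]

open Finset MeasureTheory Filter

variable {n : ℕ}

lemma cyl_mix (P : Matrix (Fin n) (Fin n) ℝ) (hn : 1 ≤ n)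
    (hP0 : ∀ i j, 0 ≤ P i j) (hP1 : ∀ i, ∑ j, P i j = 1)
    (p : ℕ) (hp : 1 ≤ p) (hQpos : ∀ i j, 0 < (P ^ p) i j)
    (v : Fin n → ℝ) (hv0 : ∀ i, 0 < v i) (hv1 : ∑ i, v i = 1)
    (hvs : ∀ j, ∑ i, v i * P i j = v j)
    (μ : Measure (ℤ → Fin n))
    (hcyl : ∀ n₂ n₁ : ℤ, n₂ ≤ n₁ → ∀ w : ℤ → Fin n,
      μ (Cyl n₂ n₁ w) =
        ENNReal.ofReal (v (w n₂) * ∏ i ∈ Finset.Ico n₂ n₁, P (w i) (w (i + 1)))) :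
    ∀ a b c d : ℤ, a ≤ b → c ≤ d → ∀ w u : ℤ → Fin n,
      Tendsto (fun k : ℕ => μ (Cyl a b w ∩ (shiftM n)^[k] ⁻¹' Cyl c d u)) atTop
        (nhds (μ (Cyl a b w) * μ (Cyl c d u))) := by
  intro a b c d hab hcd w u
  have hPF := aux_PF P hn hP0 hP1 p hp hQpos v hv0 hv1 hvs
  set W : ℝ := v (w a) * ∏ i ∈ Finset.Ico a b, P (w i) (w (i + 1)) with hW
  set U : ℝ := ∏ i ∈ Finset.Ico c d, P (u i) (u (i + 1)) with hU
  have hW0 : 0 ≤ W := mul_nonneg (hv0 _).le (Finset.prod_nonneg fun i _ => hP0 _ _)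
  have hU0 : 0 ≤ U := Finset.prod_nonneg fun i _ => hP0 _ _
  -- the eventual formula
  set N : ℕ := (b + 1 - c).toNat + 1 with hN
  have hform : ∀ k : ℕ, N ≤ k →
      μ (Cyl a b w ∩ (shiftM n)^[k] ⁻¹' Cyl c d u) =
        ENNReal.ofReal (W * (P ^ ((c + k - b - 1).toNat + 1)) (w b) (u c) * U) := by
    intro k hk
    rw [shift_preimage_Cyl]
    set m : ℕ := (c + k - b - 1).toNat with hm
    have hckb : c + (k : ℤ) = b + 1 + (m : ℤ) := by omega
    rw [gap_measure P v hP0 hv0 μ hcyl m a b (c + k) (d + k) hab hckb (by omega) w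
      (fun j => u (j - k))]
    congr 1
    have h1 : u (c + (k : ℤ) - (k : ℤ)) = u c := by norm_num
    have h2 : ∏ i ∈ Finset.Ico (c + (k:ℤ)) (d + (k:ℤ)),
        P (u (i - k)) (u (i + 1 - k)) = U := by
      rw [hU, show Finset.Ico (c + (k:ℤ)) (d + (k:ℤ)) =
        Finset.map (addLeftEmbedding (k:ℤ)) (Finset.Ico c d) by
          rw [Finset.map_add_left_Ico]; congr 1 <;> ring]
      rw [Finset.prod_map]
      refine Finset.prod_congr rfl fun i _ => ?_
      have e1 : (k:ℤ) + i - k = i := by ring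
      have e2 : (k:ℤ) + i + 1 - k = i + 1 := by ring
      simp only [addLeftEmbedding_apply]
      rw [e1, e2]
    rw [h1, h2, hW]
  -- limits
  have hBm : μ (Cyl a b w) = ENNReal.ofReal W := hcyl a b hab w
  have hCm : μ (Cyl c d u) = ENNReal.ofReal (v (u c) * U) := hcyl c d hcd u
  have hcomp : Tendsto (fun k : ℕ => (c + (k:ℤ) - b - 1).toNat + 1) atTop atTop := by
    refine tendsto_atTop_atTop.mpr fun q => ⟨q + (b + 1 - c).toNat, fun k hk => ?_⟩
    omega
  have hPtend : Tendsto (fun k : ℕ => (P ^ ((c + (k:ℤ) - b - 1).toNat + 1)) (w b) (u c))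
      atTop (nhds (v (u c))) := (hPF (w b) (u c)).comp hcomp
  have hreal : Tendsto (fun k : ℕ => W * (P ^ ((c + (k:ℤ) - b - 1).toNat + 1)) (w b) (u c) * U)
      atTop (nhds (W * v (u c) * U)) := (hPtend.const_mul W).mul_const U
  have henn : Tendsto (fun k : ℕ =>
      ENNReal.ofReal (W * (P ^ ((c + (k:ℤ) - b - 1).toNat + 1)) (w b) (u c) * U)) atTop
      (nhds (ENNReal.ofReal (W * v (u c) * U))) := ENNReal.tendsto_ofReal hreal
  have hlim : ENNReal.ofReal (W * v (u c) * U) = μ (Cyl a b w) * μ (Cyl c d u) := by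
    rw [hBm, hCm, ← ENNReal.ofReal_mul hW0]
    congr 1
    ring
  rw [← hlim]
  refine henn.congr' ?_
  filter_upwards [eventually_ge_atTop N] with k hk
  exact (hform k hk).symm

def cylSys (n : ℕ) : Set (Set (ℤ → Fin n)) :=
  insert ∅ {s | ∃ (N : ℕ) (w : ℤ → Fin n), s = Cyl (-(N : ℤ)) N w}

lemma isPiSystem_cylSys : IsPiSystem (cylSys n) := by
  rintro s hs t ht hst
  rcases hs with rfl | ⟨N, w, rfl⟩
  · simp at hst
  rcases ht with rfl | ⟨M, u, rfl⟩
  · rw [Set.inter_empty] at hst; simp at hst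
  obtain ⟨ω, hω1, hω2⟩ := hst
  rcases le_total N M with h | h
  · have hsub : Cyl (-(M:ℤ)) M u ⊆ Cyl (-(N:ℤ)) N w := by
      intro ω' hω'
      intro i hi1 hi2
      have hNM : (N : ℤ) ≤ M := by exact_mod_cast h
      rw [hω' i (by omega) (by omega), ← hω2 i (by omega) (by omega),
        hω1 i hi1 hi2]
    right
    exact ⟨M, u, Set.inter_eq_self_of_subset_right hsub⟩
  · have hsub : Cyl (-(N:ℤ)) N w ⊆ Cyl (-(M:ℤ)) M u := by
      intro ω' hω'
      intro i hi1 hi2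
      have hNM : (M : ℤ) ≤ N := by exact_mod_cast h
      rw [hω' i (by omega) (by omega), ← hω1 i (by omega) (by omega),
        hω2 i hi1 hi2]
    right
    exact ⟨N, w, Set.inter_eq_self_of_subset_left hsub⟩

lemma generate_cylSys :
    (inferInstance : MeasurableSpace (ℤ → Fin n)) = MeasurableSpace.generateFrom (cylSys n) := by
  have h1 : (MeasurableSpace.pi : MeasurableSpace (ℤ → Fin n)) ≤
      MeasurableSpace.generateFrom (cylSys n) := by
    refine iSup_le fun i => ?_
    rw [← measurable_iff_comap_le]
    refine @measurable_to_countable' (Fin n) (ℤ → Fin n) _ _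
      (MeasurableSpace.generateFrom (cylSys n)) _ fun a => ?_
    set N : ℕ := i.natAbs with hNdef
    set ext : ((Finset.Icc (-(N:ℤ)) (N:ℤ) : Finset ℤ) → Fin n) → (ℤ → Fin n) :=
      fun g j => if h : j ∈ Finset.Icc (-(N:ℤ)) (N:ℤ) then g ⟨j, h⟩ else a with hext
    have hiN : i ∈ Finset.Icc (-(N:ℤ)) (N:ℤ) := by
      simp only [Finset.mem_Icc]; omega
    have hpre : (fun ω : ℤ → Fin n => ω i) ⁻¹' {a} =
        ⋃ (g : (Finset.Icc (-(N:ℤ)) (N:ℤ) : Finset ℤ) → Fin n) (_ : ext g i = a),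
          Cyl (-(N:ℤ)) (N:ℤ) (ext g) := by
      ext ω
      simp only [Set.mem_preimage, Set.mem_singleton_iff, Set.mem_iUnion]
      constructor
      · intro hωi
        refine ⟨fun x => ω x.1, ?_, ?_⟩
        · rw [hext]; simp only [hiN, dif_pos]; exact hωi
        · intro j hj1 hj2
          rw [hext]
          simp only [show j ∈ Finset.Icc (-(N:ℤ)) (N:ℤ) by simp only [Finset.mem_Icc]; omega,
            dif_pos]
      · rintro ⟨g, hga, hg⟩
        rw [← hga, hg i (by omega) (by omega)]
    rw [hpre]
    refine MeasurableSet.iUnion fun g => MeasurableSet.iUnion fun _ => ?_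
    exact MeasurableSpace.measurableSet_generateFrom (Or.inr ⟨N, ext g, rfl⟩)
  refine le_antisymm h1 (MeasurableSpace.generateFrom_le fun t ht => ?_)
  rcases ht with rfl | ⟨N, w, rfl⟩
  · exact MeasurableSet.empty
  · exact measurableSet_Cyl _ _ _

open MeasureTheory Filter

variable {n : ℕ}

lemma mix_compl_right (μ : Measure (ℤ → Fin n)) [IsProbabilityMeasure μ]
    (B C : Set (ℤ → Fin n)) (hB : MeasurableSet B) (hC : MeasurableSet C)
    (h : Tendsto (fun k : ℕ => (μ (B ∩ (shiftM n)^[k] ⁻¹' C)).toReal) atTop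
      (nhds ((μ B).toReal * (μ C).toReal))) :
    Tendsto (fun k : ℕ => (μ (B ∩ (shiftM n)^[k] ⁻¹' Cᶜ)).toReal) atTop
      (nhds ((μ B).toReal * (μ Cᶜ).toReal)) := by
  have hne : ∀ s : Set (ℤ → Fin n), μ s ≠ ⊤ := fun s => measure_ne_top μ s
  have key : ∀ k : ℕ, (μ (B ∩ (shiftM n)^[k] ⁻¹' Cᶜ)).toReal =
      (μ B).toReal - (μ (B ∩ (shiftM n)^[k] ⁻¹' C)).toReal := by
    intro k
    have hCk : MeasurableSet ((shiftM n)^[k] ⁻¹' C) := (measurable_shiftM.iterate k) hC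
    have hsub : B ∩ (shiftM n)^[k] ⁻¹' C ⊆ B := Set.inter_subset_left
    have hset : B ∩ (shiftM n)^[k] ⁻¹' Cᶜ = B \ (B ∩ (shiftM n)^[k] ⁻¹' C) := by
      ext ω
      simp only [Set.mem_inter_iff, Set.mem_preimage, Set.mem_compl_iff, Set.mem_diff]
      tauto
    rw [hset, measure_diff hsub (hB.inter hCk).nullMeasurableSet (hne _),
      ENNReal.toReal_sub_of_le (measure_mono hsub) (hne _)]
  have hlim : (μ B).toReal * (μ Cᶜ).toReal =
      (μ B).toReal - (μ B).toReal * (μ C).toReal := by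
    rw [measure_compl hC (hne C), measure_univ,
      ENNReal.toReal_sub_of_le prob_le_one (by simp), ENNReal.toReal_one]
    ring
  have final : Tendsto (fun k : ℕ => (μ B).toReal - (μ (B ∩ (shiftM n)^[k] ⁻¹' C)).toReal)
      atTop (nhds ((μ B).toReal - (μ B).toReal * (μ C).toReal)) := tendsto_const_nhds.sub h
  rw [← hlim] at final
  exact final.congr fun k => (key k).symm

lemma mix_compl_left (μ : Measure (ℤ → Fin n)) [IsProbabilityMeasure μ]
    (hinv : ∀ s : Set (ℤ → Fin n), MeasurableSet s → μ (shiftM n ⁻¹' s) = μ s)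
    (B C : Set (ℤ → Fin n)) (hB : MeasurableSet B) (hC : MeasurableSet C)
    (h : Tendsto (fun k : ℕ => (μ (B ∩ (shiftM n)^[k] ⁻¹' C)).toReal) atTop
      (nhds ((μ B).toReal * (μ C).toReal))) :
    Tendsto (fun k : ℕ => (μ (Bᶜ ∩ (shiftM n)^[k] ⁻¹' C)).toReal) atTop
      (nhds ((μ Bᶜ).toReal * (μ C).toReal)) := by
  have hne : ∀ s : Set (ℤ → Fin n), μ s ≠ ⊤ := fun s => measure_ne_top μ s
  have hIter := iter_inv μ hinv
  have key : ∀ k : ℕ, (μ (Bᶜ ∩ (shiftM n)^[k] ⁻¹' C)).toReal =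
      (μ C).toReal - (μ (B ∩ (shiftM n)^[k] ⁻¹' C)).toReal := by
    intro k
    have hCk : MeasurableSet ((shiftM n)^[k] ⁻¹' C) := (measurable_shiftM.iterate k) hC
    have hsub : B ∩ (shiftM n)^[k] ⁻¹' C ⊆ (shiftM n)^[k] ⁻¹' C := Set.inter_subset_right
    have hset : Bᶜ ∩ (shiftM n)^[k] ⁻¹' C =
        ((shiftM n)^[k] ⁻¹' C) \ (B ∩ (shiftM n)^[k] ⁻¹' C) := by
      ext ω
      simp only [Set.mem_inter_iff, Set.mem_preimage, Set.mem_compl_iff, Set.mem_diff]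
      tauto
    rw [hset, measure_diff hsub (hB.inter hCk).nullMeasurableSet (hne _),
      ENNReal.toReal_sub_of_le (measure_mono hsub) (hne _), hIter k C hC]
  have hlim : (μ Bᶜ).toReal * (μ C).toReal =
      (μ C).toReal - (μ B).toReal * (μ C).toReal := by
    rw [measure_compl hB (hne B), measure_univ,
      ENNReal.toReal_sub_of_le prob_le_one (by simp), ENNReal.toReal_one]
    ring
  have final : Tendsto (fun k : ℕ => (μ C).toReal - (μ (B ∩ (shiftM n)^[k] ⁻¹' C)).toReal)
      atTop (nhds ((μ C).toReal - (μ B).toReal * (μ C).toReal)) := tendsto_const_nhds.sub h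
  rw [← hlim] at final
  exact final.congr fun k => (key k).symm

lemma mix_union_right (μ : Measure (ℤ → Fin n)) [IsProbabilityMeasure μ]
    (hinv : ∀ s : Set (ℤ → Fin n), MeasurableSet s → μ (shiftM n ⁻¹' s) = μ s)
    (B : Set (ℤ → Fin n)) (hB : MeasurableSet B)
    (f : ℕ → Set (ℤ → Fin n)) (hd : Pairwise (Function.onFun Disjoint f))
    (hf : ∀ i, MeasurableSet (f i))
    (h : ∀ i, Tendsto (fun k : ℕ => (μ (B ∩ (shiftM n)^[k] ⁻¹' f i)).toReal) atTop
      (nhds ((μ B).toReal * (μ (f i)).toReal))) :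
    Tendsto (fun k : ℕ => (μ (B ∩ (shiftM n)^[k] ⁻¹' ⋃ i, f i)).toReal) atTop
      (nhds ((μ B).toReal * (μ (⋃ i, f i)).toReal)) := by
  have hne : ∀ s : Set (ℤ → Fin n), μ s ≠ ⊤ := fun s => measure_ne_top μ s
  have hIter := iter_inv μ hinv
  have key : ∀ k : ℕ, (μ (B ∩ (shiftM n)^[k] ⁻¹' ⋃ i, f i)).toReal =
      ∑' i, (μ (B ∩ (shiftM n)^[k] ⁻¹' f i)).toReal := by
    intro k
    rw [Set.preimage_iUnion, Set.inter_iUnion,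
      measure_iUnion
        (fun i j hij => ((hd hij).preimage _).mono Set.inter_subset_right Set.inter_subset_right)
        (fun i => hB.inter ((measurable_shiftM.iterate k) (hf i))),
      ENNReal.tsum_toReal_eq fun i => hne _]
  have hsummable : Summable fun i => (μ (f i)).toReal := by
    refine ENNReal.summable_toReal ?_
    rw [← measure_iUnion hd hf]
    exact hne _
  have hbound : ∀ᶠ (k : ℕ) in atTop, ∀ i,
      ‖(μ (B ∩ (shiftM n)^[k] ⁻¹' f i)).toReal‖ ≤ (μ (f i)).toReal := by
    refine Filter.Eventually.of_forall fun k i => ?_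
    rw [Real.norm_eq_abs, abs_of_nonneg ENNReal.toReal_nonneg]
    refine ENNReal.toReal_mono (hne _) ?_
    calc μ (B ∩ (shiftM n)^[k] ⁻¹' f i) ≤ μ ((shiftM n)^[k] ⁻¹' f i) :=
          measure_mono Set.inter_subset_right
      _ = μ (f i) := hIter k (f i) (hf i)
  have main := tendsto_tsum_of_dominated_convergence hsummable h hbound
  have hlim : ∑' i, (μ B).toReal * (μ (f i)).toReal = (μ B).toReal * (μ (⋃ i, f i)).toReal := by
    rw [tsum_mul_left, measure_iUnion hd hf, ENNReal.tsum_toReal_eq fun i => hne _]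
  rw [hlim] at main
  exact main.congr fun k => (key k).symm

lemma mix_union_left (μ : Measure (ℤ → Fin n)) [IsProbabilityMeasure μ]
    (C : Set (ℤ → Fin n)) (hC : MeasurableSet C)
    (f : ℕ → Set (ℤ → Fin n)) (hd : Pairwise (Function.onFun Disjoint f))
    (hf : ∀ i, MeasurableSet (f i))
    (h : ∀ i, Tendsto (fun k : ℕ => (μ (f i ∩ (shiftM n)^[k] ⁻¹' C)).toReal) atTop
      (nhds ((μ (f i)).toReal * (μ C).toReal))) :
    Tendsto (fun k : ℕ => (μ ((⋃ i, f i) ∩ (shiftM n)^[k] ⁻¹' C)).toReal) atTop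
      (nhds ((μ (⋃ i, f i)).toReal * (μ C).toReal)) := by
  have hne : ∀ s : Set (ℤ → Fin n), μ s ≠ ⊤ := fun s => measure_ne_top μ s
  have key : ∀ k : ℕ, (μ ((⋃ i, f i) ∩ (shiftM n)^[k] ⁻¹' C)).toReal =
      ∑' i, (μ (f i ∩ (shiftM n)^[k] ⁻¹' C)).toReal := by
    intro k
    rw [Set.iUnion_inter,
      measure_iUnion
        (fun i j hij => ((hd hij).mono Set.inter_subset_left Set.inter_subset_left))
        (fun i => (hf i).inter ((measurable_shiftM.iterate k) hC)),
      ENNReal.tsum_toReal_eq fun i => hne _]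
  have hsummable : Summable fun i => (μ (f i)).toReal := by
    refine ENNReal.summable_toReal ?_
    rw [← measure_iUnion hd hf]
    exact hne _
  have hbound : ∀ᶠ (k : ℕ) in atTop, ∀ i,
      ‖(μ (f i ∩ (shiftM n)^[k] ⁻¹' C)).toReal‖ ≤ (μ (f i)).toReal := by
    refine Filter.Eventually.of_forall fun k i => ?_
    rw [Real.norm_eq_abs, abs_of_nonneg ENNReal.toReal_nonneg]
    exact ENNReal.toReal_mono (hne _) (measure_mono Set.inter_subset_left)
  have main := tendsto_tsum_of_dominated_convergence hsummable h hbound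
  have hlim : ∑' i, (μ (f i)).toReal * (μ C).toReal = (μ (⋃ i, f i)).toReal * (μ C).toReal := by
    rw [tsum_mul_right, measure_iUnion hd hf, ENNReal.tsum_toReal_eq fun i => hne _]
  rw [hlim] at main
  exact main.congr fun k => (key k).symm

open MeasureTheory Filter

/-- if all entries of `A ^ p` are positive for some `p ≥ 1`, then the left
shift is mixing with respect to the two-sided Markov measure `μ_P`. -/
theorem stmt1 (n : ℕ) (hn : 1 ≤ n)
    (A P : Matrix (Fin n) (Fin n) ℝ)
    (hA : ∀ i j, A i j = 0 ∨ A i j = 1)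
    (p : ℕ) (hp : 1 ≤ p) (hAp : ∀ i j, 0 < (A ^ p) i j)
    (hPnonneg : ∀ i j, 0 ≤ P i j)
    (hProw : ∀ i, ∑ j, P i j = 1)
    (hPA : ∀ i j, 0 < P i j ↔ A i j = 1)
    (v : Fin n → ℝ)
    (hvpos : ∀ i, 0 < v i)
    (hvsum : ∑ i, v i = 1)
    (hvstat : ∀ j, ∑ i, v i * P i j = v j)
    (μ : Measure (ℤ → Fin n)) (hprob : IsProbabilityMeasure μ)
    (hinv : ∀ s : Set (ℤ → Fin n), MeasurableSet s →
      μ ((fun ω (i : ℤ) => ω (i + 1)) ⁻¹' s) = μ s)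
    (hcyl : ∀ n₂ n₁ : ℤ, n₂ ≤ n₁ → ∀ w : ℤ → Fin n,
      μ {ω | ∀ i : ℤ, n₂ ≤ i → i ≤ n₁ → ω i = w i} =
        ENNReal.ofReal (v (w n₂) * ∏ i ∈ Finset.Ico n₂ n₁, P (w i) (w (i + 1)))) :
    ∀ B C : Set (ℤ → Fin n), MeasurableSet B → MeasurableSet C →
      Filter.Tendsto (fun k : ℕ => μ (B ∩ (fun ω (i : ℤ) => ω (i + 1))^[k] ⁻¹' C))
        Filter.atTop (nhds (μ B * μ C)) := by
  intro B C hB hC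
  haveI := hprob
  have hne : ∀ s : Set (ℤ → Fin n), μ s ≠ ⊤ := fun s => measure_ne_top μ s
  have hinv' : ∀ s : Set (ℤ → Fin n), MeasurableSet s → μ (shiftM n ⁻¹' s) = μ s := hinv
  have hcyl' : ∀ n₂ n₁ : ℤ, n₂ ≤ n₁ → ∀ w : ℤ → Fin n,
      μ (Cyl n₂ n₁ w) =
        ENNReal.ofReal (v (w n₂) * ∏ i ∈ Finset.Ico n₂ n₁, P (w i) (w (i + 1))) := hcyl
  have hQpos : ∀ i j, 0 < (P ^ p) i j := fun i j =>
    aux_pow_pos P A hA hPnonneg hPA p i j (hAp i j)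
  have hgen := generate_cylSys (n := n)
  have hpi := isPiSystem_cylSys (n := n)
  -- mixing for a pair of basic sets, in toReal form
  have basic_mix : ∀ B' ∈ cylSys n, ∀ C' ∈ cylSys n,
      Tendsto (fun k : ℕ => (μ (B' ∩ (shiftM n)^[k] ⁻¹' C')).toReal) atTop
        (nhds ((μ B').toReal * (μ C').toReal)) := by
    intro B' hB' C' hC'
    rcases hB' with rfl | ⟨N, w, rfl⟩
    · refine Tendsto.congr (fun k => ?_) (by simpa using tendsto_const_nhds)
      simp
    rcases hC' with rfl | ⟨M, u, rfl⟩
    · refine Tendsto.congr (fun k => ?_) (by simpa using tendsto_const_nhds)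
      simp
    have hNN : -(N:ℤ) ≤ (N:ℤ) := by omega
    have hMM : -(M:ℤ) ≤ (M:ℤ) := by omega
    have h := cyl_mix P hn hPnonneg hProw p hp hQpos v hvpos hvsum hvstat μ hcyl'
      (-(N:ℤ)) N (-(M:ℤ)) M hNN hMM w u
    have h2 := (ENNReal.tendsto_toReal_iff (fun k => hne _)
      (ENNReal.mul_ne_top (hne _) (hne _))).mpr h
    simpa [ENNReal.toReal_mul] using h2
  -- step A : basic B', arbitrary measurable C'
  have stepA : ∀ B' ∈ cylSys n, ∀ C' : Set (ℤ → Fin n), MeasurableSet C' →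
      Tendsto (fun k : ℕ => (μ (B' ∩ (shiftM n)^[k] ⁻¹' C')).toReal) atTop
        (nhds ((μ B').toReal * (μ C').toReal)) := by
    intro B' hB' C' hC'
    refine MeasurableSpace.induction_on_inter
      (C := fun t _ => Tendsto (fun k : ℕ => (μ (B' ∩ (shiftM n)^[k] ⁻¹' t)).toReal) atTop
        (nhds ((μ B').toReal * (μ t).toReal))) hgen hpi ?_ ?_ ?_ ?_ _ hC'
    · refine Tendsto.congr (fun k => ?_) (by simpa using tendsto_const_nhds)
      simp
    · intro t ht
      exact basic_mix B' hB' t ht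
    · intro t ht hmix
      have hB'm : MeasurableSet B' := by
        rcases hB' with rfl | ⟨N, w, rfl⟩
        · exact MeasurableSet.empty
        · exact measurableSet_Cyl _ _ _
      exact mix_compl_right μ B' t hB'm ht hmix
    · intro f hd hf hmix
      have hB'm : MeasurableSet B' := by
        rcases hB' with rfl | ⟨N, w, rfl⟩
        · exact MeasurableSet.empty
        · exact measurableSet_Cyl _ _ _
      exact mix_union_right μ hinv' B' hB'm f hd hf hmix
  -- step B : arbitrary measurable B and C
  have stepB : ∀ B' : Set (ℤ → Fin n), MeasurableSet B' →
      Tendsto (fun k : ℕ => (μ (B' ∩ (shiftM n)^[k] ⁻¹' C)).toReal) atTop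
        (nhds ((μ B').toReal * (μ C).toReal)) := by
    intro B' hB'
    refine MeasurableSpace.induction_on_inter
      (C := fun t _ => Tendsto (fun k : ℕ => (μ (t ∩ (shiftM n)^[k] ⁻¹' C)).toReal) atTop
        (nhds ((μ t).toReal * (μ C).toReal))) hgen hpi ?_ ?_ ?_ ?_ _ hB'
    · refine Tendsto.congr (fun k => ?_) (by simpa using tendsto_const_nhds)
      simp
    · intro t ht
      exact stepA t ht C hC
    · intro t ht hmix
      exact mix_compl_left μ hinv' t C ht hC hmix
    · intro f hd hf hmix
      exact mix_union_left μ C hC f hd hf hmix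
  have hfin := stepB B hB
  rw [← ENNReal.toReal_mul] at hfin
  exact (ENNReal.tendsto_toReal_iff (fun k => hne _)
    (ENNReal.mul_ne_top (hne _) (hne _))).mp hfin
end

section
/- Let A be an n×n zero-one matrix such that all entries of A^p are positive for some p ≥ 1, let P be a Markov matrix compatible with A, v a stationary probability vector for P, and μ_P the associated two-sided Markov measure on {1,…,n}^ℤ. Then the left shift σ is ergodic with respect to μ_P: every measurable set B ⊆ {1,…,n}^ℤ with σ^{−1}(B) = B satisfies μ_P(B) = 0 or μ_P(B) = 1. -/
open MeasureTheory
open scoped symmDiff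

theorem rowsum (n : ℕ) (P : Matrix (Fin n) (Fin n) ℝ) (hProw : ∀ i, ∑ j, P i j = 1) :
    ∀ (k : ℕ) (i), ∑ j, (P ^ k) i j = 1 := by
  intro k
  induction k with
  | zero => intro i; simp [Matrix.one_apply, Finset.sum_ite_eq]
  | succ k ih =>
    intro i
    simp only [pow_succ, Matrix.mul_apply]
    rw [Finset.sum_comm]
    calc ∑ l, ∑ j, (P ^ k) i l * P l j = ∑ l, (P ^ k) i l * ∑ j, P l j := by
          simp [Finset.mul_sum]
      _ = 1 := by simp [hProw, ih]

theorem pownonneg (n : ℕ) (P : Matrix (Fin n) (Fin n) ℝ) (hP : ∀ i j, 0 ≤ P i j) :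
    ∀ (k : ℕ) (i j), 0 ≤ (P ^ k) i j := by
  intro k
  induction k with
  | zero => intro i j; rw [pow_zero]; by_cases h : i = j <;> simp [Matrix.one_apply, h]
  | succ k ih =>
    intro i j
    simp only [pow_succ, Matrix.mul_apply]
    exact Finset.sum_nonneg fun l _ => mul_nonneg (ih i l) (hP l j)

theorem powpos (n : ℕ) (A P : Matrix (Fin n) (Fin n) ℝ)
    (hA : ∀ i j, A i j = 0 ∨ A i j = 1)
    (hPnonneg : ∀ i j, 0 ≤ P i j)
    (hPA : ∀ i j, 0 < P i j ↔ A i j = 1) :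
    ∀ (k : ℕ) (i j), 0 < (A ^ k) i j → 0 < (P ^ k) i j := by
  have hAnn : ∀ i j, 0 ≤ A i j := fun i j => by rcases hA i j with h | h <;> simp [h]
  intro k
  induction k with
  | zero => intro i j h; rw [pow_zero] at h ⊢; exact h
  | succ k ih =>
    intro i j h
    simp only [pow_succ, Matrix.mul_apply] at h ⊢
    obtain ⟨l, -, hl⟩ := Finset.exists_lt_of_sum_lt (by
      simpa using h : ∑ (l : Fin n), (0:ℝ) < ∑ l, (A ^ k) i l * A l j)
    have h1 : 0 < (A ^ k) i l * A l j := by simpa using hl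
    have h2 : 0 < (A ^ k) i l := lt_of_le_of_lt (le_refl 0) (by
      rcases lt_or_eq_of_le (pownonneg n A hAnn k i l) with h' | h'
      · exact h'
      · exfalso; rw [← h'] at h1; simpa using h1)
    have h3 : 0 < A l j := by
      rcases lt_or_eq_of_le (hAnn l j) with h' | h'
      · exact h'
      · exfalso; rw [← h'] at h1; nlinarith
    have hp2 : 0 < (P ^ k) i l := ih i l h2
    have hp3 : 0 < P l j := (hPA l j).2 (by rcases hA l j with h' | h' <;> [linarith; exact h'])
    refine Finset.sum_pos' (fun m _ => mul_nonneg (pownonneg n P hPnonneg k i m) (hPnonneg m j)) ⟨l, Finset.mem_univ l, mul_pos hp2 hp3⟩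

theorem powge (n : ℕ) (P : Matrix (Fin n) (Fin n) ℝ)
    (hPnonneg : ∀ i j, 0 ≤ P i j) (hProw : ∀ i, ∑ j, P i j = 1)
    (p : ℕ) (δ : ℝ) (hδ : ∀ i j, δ ≤ (P ^ p) i j) :
    ∀ m, p ≤ m → ∀ i j, δ ≤ (P ^ m) i j := by
  intro m hm i j
  obtain ⟨r, rfl⟩ : ∃ r, m = r + p := ⟨m - p, by omega⟩
  rw [pow_add, Matrix.mul_apply]
  calc δ = ∑ l, (P ^ r) i l * δ := by
        rw [← Finset.sum_mul, rowsum n P hProw r i, one_mul]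
    _ ≤ ∑ l, (P ^ r) i l * (P ^ p) l j :=
        Finset.sum_le_sum fun l _ => mul_le_mul_of_nonneg_left (hδ l j) (pownonneg n P hPnonneg r i l)

def cylS (n : ℕ) (a b : ℤ) (w : ℤ → Fin n) : Set (ℤ → Fin n) :=
  {ω | ∀ i : ℤ, a ≤ i → i ≤ b → ω i = w i}

theorem cylS_meas (n : ℕ) (a b : ℤ) (w : ℤ → Fin n) : MeasurableSet (cylS n a b w) := by
  have : cylS n a b w = ⋂ i : ℤ, {ω : ℤ → Fin n | a ≤ i → i ≤ b → ω i = w i} := by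
    ext ω; simp [cylS, Set.mem_iInter]
  rw [this]
  refine MeasurableSet.iInter fun i => ?_
  by_cases h1 : a ≤ i
  · by_cases h2 : i ≤ b
    · have : {ω : ℤ → Fin n | a ≤ i → i ≤ b → ω i = w i} = (fun ω : ℤ → Fin n => ω i) ⁻¹' {w i} := by
        ext ω; simp [h1, h2]
      rw [this]; exact measurable_pi_apply i (measurableSet_singleton _)
    · have : {ω : ℤ → Fin n | a ≤ i → i ≤ b → ω i = w i} = Set.univ := by
        ext ω; simp [h2]
      rw [this]; exact MeasurableSet.univ
  · have : {ω : ℤ → Fin n | a ≤ i → i ≤ b → ω i = w i} = Set.univ := by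
      ext ω; simp [h1]
    rw [this]; exact MeasurableSet.univ

theorem Ico_succ_insert (a b : ℤ) (h : a ≤ b) : Finset.Ico a (b+1) = insert b (Finset.Ico a b) := by
  ext i; simp only [Finset.mem_Ico, Finset.mem_insert]; omega

theorem twoblock (n : ℕ) (P : Matrix (Fin n) (Fin n) ℝ) (v : Fin n → ℝ)
    (μ : Measure (ℤ → Fin n))
    (hcyl : ∀ n₂ n₁ : ℤ, n₂ ≤ n₁ → ∀ w : ℤ → Fin n,
      μ {ω | ∀ i : ℤ, n₂ ≤ i → i ≤ n₁ → ω i = w i} =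
        ENNReal.ofReal (v (w n₂) * ∏ i ∈ Finset.Ico n₂ n₁, P (w i) (w (i + 1))))
    (hvpos : ∀ i, 0 < v i) (hPnonneg : ∀ i j, 0 ≤ P i j) :
    ∀ (m : ℕ), 1 ≤ m → ∀ a b : ℤ, a ≤ b → ∀ d : ℤ, b + m ≤ d → ∀ u w : ℤ → Fin n,
      μ (cylS n a b u ∩ cylS n (b + m) d w) =
        ENNReal.ofReal ((v (u a) * ∏ i ∈ Finset.Ico a b, P (u i) (u (i + 1))) *
          ((P ^ m) (u b) (w (b + m)) * ∏ i ∈ Finset.Ico (b + m) d, P (w i) (w (i + 1)))) := by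
  intro m hm
  induction m, hm using Nat.le_induction with
  | base =>
    intro a b hab d hd u w
    simp only [Nat.cast_one] at hd ⊢
    set g : ℤ → Fin n := fun i => if i ≤ b then u i else w i with hg
    have hset : cylS n a b u ∩ cylS n (b + 1) d w = cylS n a d g := by
      ext ω
      constructor
      · rintro ⟨h1, h2⟩ i hai hid
        by_cases hib : i ≤ b
        · simp only [hg, if_pos hib]; exact h1 i hai hib
        · simp only [hg, if_neg hib]; exact h2 i (by omega) hid
      · intro h
        constructor
        · intro i hai hib
          have := h i hai (by push_cast at hd ⊢; omega)
          simpa [hg, if_pos hib] using this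
        · intro i hbi hid
          have := h i (by push_cast at hbi ⊢; omega) hid
          have hib : ¬ i ≤ b := by push_cast at hbi; omega
          simpa [hg, if_neg hib] using this
    rw [hset]
    have := hcyl a d (by push_cast at hd; omega) g
    rw [show cylS n a d g = {ω | ∀ i : ℤ, a ≤ i → i ≤ d → ω i = g i} from rfl, this]
    congr 1
    have hsplit : Finset.Ico a d = Finset.Ico a (b+1) ∪ Finset.Ico (b+1) d := by
      rw [Finset.Ico_union_Ico_eq_Ico (by omega) (by push_cast at hd; omega)]
    have hdisj : Disjoint (Finset.Ico a (b+1)) (Finset.Ico (b+1) d) := by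
      simp [Finset.disjoint_left, Finset.mem_Ico]; omega
    rw [hsplit, Finset.prod_union hdisj, Ico_succ_insert a b hab,
      Finset.prod_insert (by simp [Finset.mem_Ico])]
    have hga : g a = u a := by simp [hg, hab]
    have hgb : g b = u b := by simp [hg]
    have hgb1 : g (b+1) = w (b+1) := by simp [hg]
    have h1 : ∏ i ∈ Finset.Ico a b, P (g i) (g (i+1)) = ∏ i ∈ Finset.Ico a b, P (u i) (u (i+1)) := by
      refine Finset.prod_congr rfl fun i hi => ?_
      simp only [Finset.mem_Ico] at hi
      simp [hg, show i ≤ b by omega, show i + 1 ≤ b by omega]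
    have h2 : ∏ i ∈ Finset.Ico (b+1) d, P (g i) (g (i+1)) = ∏ i ∈ Finset.Ico (b+1) d, P (w i) (w (i+1)) := by
      refine Finset.prod_congr rfl fun i hi => ?_
      simp only [Finset.mem_Ico] at hi
      simp [hg, show ¬ i ≤ b by omega, show ¬ i + 1 ≤ b by omega]
    rw [hga, h1, h2, hgb, hgb1]
    push_cast
    rw [pow_one]
    ring
  | succ m hm ih =>
    intro a b hab d hd u w
    set c : ℤ := b + (m + 1 : ℕ) with hc
    classical
    set u' : Fin n → ℤ → Fin n := fun j i => if i ≤ b then u i else j with hu'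
    have hcover : cylS n a b u ∩ cylS n c d w =
        ⋃ j : Fin n, (cylS n a (b+1) (u' j) ∩ cylS n ((b+1) + (m:ℕ)) d w) := by
      have hcc : ((b+1) + (m:ℕ) : ℤ) = c := by push_cast [hc]; ring
      ext ω
      simp only [Set.mem_iUnion, Set.mem_inter_iff, hcc]
      constructor
      · rintro ⟨h1, h2⟩
        refine ⟨ω (b+1), ⟨?_, h2⟩⟩
        intro i hai hib
        by_cases hb : i ≤ b
        · simp only [hu', if_pos hb]; exact h1 i hai hb
        · have : i = b + 1 := by omega
          simp [hu', hb, this]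
      · rintro ⟨j, h1, h2⟩
        refine ⟨?_, h2⟩
        intro i hai hib
        have := h1 i hai (by omega)
        simpa [hu', hib] using this
    have hdisj : Pairwise (Function.onFun Disjoint
        fun j : Fin n => (cylS n a (b+1) (u' j) ∩ cylS n ((b+1) + (m:ℕ)) d w)) := by
      intro j j' hjj'
      simp only [Function.onFun, Set.disjoint_left]
      rintro ω ⟨h1, -⟩ ⟨h1', -⟩
      have e1 := h1 (b+1) (by omega) le_rfl
      have e2 := h1' (b+1) (by omega) le_rfl
      simp only [hu', if_neg (by omega : ¬ (b+1:ℤ) ≤ b)] at e1 e2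
      exact hjj' (e1 ▸ e2 ▸ rfl)
    have hmeas : ∀ j : Fin n, MeasurableSet (cylS n a (b+1) (u' j) ∩ cylS n ((b+1) + (m:ℕ)) d w) :=
      fun j => (cylS_meas n _ _ _).inter (cylS_meas n _ _ _)
    rw [hcover, measure_iUnion hdisj hmeas]
    have hihval : ∀ j : Fin n,
        μ (cylS n a (b+1) (u' j) ∩ cylS n ((b+1) + (m:ℕ)) d w) =
        ENNReal.ofReal ((v (u a) * ∏ i ∈ Finset.Ico a b, P (u i) (u (i+1))) *
          (P (u b) j * ((P ^ m) j (w c) * ∏ i ∈ Finset.Ico c d, P (w i) (w (i+1))))) := by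
      intro j
      have := ih a (b+1) (by omega) d (by omega) (u' j) w
      rw [this]
      congr 1
      have hcc : ((b+1) + (m:ℕ) : ℤ) = c := by push_cast [hc]; ring
      rw [hcc]
      have hsplit : ∏ i ∈ Finset.Ico a (b+1), P (u' j i) (u' j (i+1)) =
          (∏ i ∈ Finset.Ico a b, P (u i) (u (i+1))) * P (u b) j := by
        rw [Ico_succ_insert a b hab, Finset.prod_insert (by simp [Finset.mem_Ico])]
        have hb : u' j b = u b := by simp [hu']
        have hb1 : u' j (b+1) = j := by simp [hu']
        rw [hb, hb1, mul_comm]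
        congr 1
        refine Finset.prod_congr rfl fun i hi => ?_
        simp only [Finset.mem_Ico] at hi
        simp [hu', show i ≤ b by omega, show i + 1 ≤ b by omega]
      have ha : u' j a = u a := by simp [hu', hab]
      have hb1 : u' j (b+1) = j := by simp [hu']
      rw [hsplit, ha, hb1]
      ring
    simp only [hihval]
    rw [tsum_fintype]
    rw [← ENNReal.ofReal_sum_of_nonneg (fun j _ => by
      have := hvpos (u a)
      have h1 : (0:ℝ) ≤ ∏ i ∈ Finset.Ico a b, P (u i) (u (i+1)) :=
        Finset.prod_nonneg fun i _ => hPnonneg _ _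
      have h2 : (0:ℝ) ≤ ∏ i ∈ Finset.Ico c d, P (w i) (w (i+1)) :=
        Finset.prod_nonneg fun i _ => hPnonneg _ _
      have h3 := pownonneg n P hPnonneg m j (w c)
      have h4 := hPnonneg (u b) j
      positivity)]
    congr 1
    have key : ∑ j : Fin n, ((v (u a) * ∏ i ∈ Finset.Ico a b, P (u i) (u (i+1))) *
          (P (u b) j * ((P ^ m) j (w c) * ∏ i ∈ Finset.Ico c d, P (w i) (w (i+1))))) =
        (v (u a) * ∏ i ∈ Finset.Ico a b, P (u i) (u (i+1))) *
          ((∑ j : Fin n, P (u b) j * (P ^ m) j (w c)) * ∏ i ∈ Finset.Ico c d, P (w i) (w (i+1))) := by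
      rw [← Finset.mul_sum]
      congr 1
      rw [Finset.sum_mul]
      exact Finset.sum_congr rfl fun j _ => by ring
    rw [key, ← Matrix.mul_apply, ← pow_succ']

def shT (n : ℕ) : (ℤ → Fin n) → (ℤ → Fin n) := fun ω i => ω (i + 1)

theorem shT_meas (n : ℕ) : Measurable (shT n) := by
  refine measurable_pi_iff.2 fun i => measurable_pi_apply _

theorem shT_iter_apply (n : ℕ) (k : ℕ) (ω : ℤ → Fin n) (i : ℤ) :
    (shT n)^[k] ω i = ω (i + k) := by
  induction k generalizing ω i with
  | zero => simp
  | succ k ih =>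
    rw [Function.iterate_succ_apply]
    rw [ih]
    simp only [shT]
    congr 1
    push_cast
    ring

theorem shT_iter_cyl (n : ℕ) (k : ℕ) (a b : ℤ) (w : ℤ → Fin n) :
    (shT n)^[k] ⁻¹' cylS n a b w = cylS n (a + k) (b + k) (fun i => w (i - k)) := by
  ext ω
  simp only [Set.mem_preimage, cylS, Set.mem_setOf_eq]
  constructor
  · intro h i hai hib
    have := h (i - k) (by omega) (by omega)
    rwa [shT_iter_apply, show i - (k:ℤ) + (k:ℤ) = i by ring] at this
  · intro h i hai hib
    rw [shT_iter_apply]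
    have := h (i + k) (by omega) (by omega)
    rwa [show i + (k:ℤ) - (k:ℤ) = i by ring] at this

theorem shT_iter_inv (n : ℕ) (μ : Measure (ℤ → Fin n))
    (hinv : ∀ s : Set (ℤ → Fin n), MeasurableSet s →
      μ ((fun ω (i : ℤ) => ω (i + 1)) ⁻¹' s) = μ s) :
    ∀ (k : ℕ) (s : Set (ℤ → Fin n)), MeasurableSet s → μ ((shT n)^[k] ⁻¹' s) = μ s := by
  intro k
  induction k with
  | zero => intro s _; simp
  | succ k ih =>
    intro s hs
    rw [Function.iterate_succ, Set.preimage_comp]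
    have hms : MeasurableSet ((shT n)^[k] ⁻¹' s) := (shT_meas n).iterate k hs
    have h2 := hinv _ hms
    rw [show (fun ω (i : ℤ) => ω (i + 1)) = shT n from rfl] at h2
    rw [h2, ih s hs]

noncomputable def winJ (m : ℕ) : Finset ℤ := Finset.Icc (-(m:ℤ)) m

def winproj (n m : ℕ) : (ℤ → Fin n) → ({ i : ℤ // i ∈ winJ m } → Fin n) :=
  fun ω i => ω i.1

def winalg (n : ℕ) : Set (Set (ℤ → Fin n)) :=
  { E | ∃ (m : ℕ) (S : Set ({ i : ℤ // i ∈ winJ m } → Fin n)), E = winproj n m ⁻¹' S }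

theorem winproj_meas (n m : ℕ) : Measurable (winproj n m) :=
  measurable_pi_iff.2 fun i => measurable_pi_apply i.1

theorem winalg_meas (n : ℕ) : ∀ E ∈ winalg n, MeasurableSet E := by
  rintro E ⟨m, S, rfl⟩
  exact winproj_meas n m (Set.Countable.measurableSet (Set.to_countable S))

theorem winalg_lift (n m M : ℕ) (hmM : m ≤ M) (S : Set ({ i : ℤ // i ∈ winJ m } → Fin n)) :
    ∃ S' : Set ({ i : ℤ // i ∈ winJ M } → Fin n), winproj n m ⁻¹' S = winproj n M ⁻¹' S' := by
  refine ⟨(fun g (i : { i : ℤ // i ∈ winJ m }) => g ⟨i.1, by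
    have := i.2; simp only [winJ, Finset.mem_Icc] at this ⊢; omega⟩) ⁻¹' S, ?_⟩
  rfl

theorem winalg_isSetAlgebra (n : ℕ) : IsSetAlgebra (winalg n) where
  empty_mem := ⟨0, ∅, by simp⟩
  compl_mem := by
    rintro E ⟨m, S, rfl⟩
    exact ⟨m, Sᶜ, by rw [Set.preimage_compl]⟩
  union_mem := by
    rintro E F ⟨m, S, rfl⟩ ⟨m', S', rfl⟩
    obtain ⟨S₁, h₁⟩ := winalg_lift n m (max m m') (le_max_left _ _) S
    obtain ⟨S₂, h₂⟩ := winalg_lift n m' (max m m') (le_max_right _ _) S'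
    exact ⟨max m m', S₁ ∪ S₂, by rw [Set.preimage_union, h₁, h₂]⟩

theorem winalg_generate (n : ℕ) :
    (inferInstance : MeasurableSpace (ℤ → Fin n)) = MeasurableSpace.generateFrom (winalg n) := by
  refine le_antisymm ?_ ?_
  · have : (inferInstance : MeasurableSpace (ℤ → Fin n)) =
        ⨆ i : ℤ, MeasurableSpace.comap (fun ω : ℤ → Fin n => ω i) inferInstance := rfl
    rw [this]
    refine iSup_le fun i => ?_
    rintro t ⟨s, -, rfl⟩
    refine MeasurableSpace.measurableSet_generateFrom ?_
    have hi : i ∈ winJ i.natAbs := by simp only [winJ, Finset.mem_Icc]; omega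
    refine ⟨i.natAbs, {g | g ⟨i, hi⟩ ∈ s}, ?_⟩
    rfl
  · exact MeasurableSpace.generateFrom_le (winalg_meas n)

noncomputable def extS (n : ℕ) (hn : 1 ≤ n) (m : ℕ) (g : { i : ℤ // i ∈ winJ m } → Fin n) : ℤ → Fin n :=
  fun i => if h : i ∈ winJ m then g ⟨i, h⟩ else ⟨0, hn⟩

theorem mem_winJ (m : ℕ) (i : ℤ) : i ∈ winJ m ↔ -(m:ℤ) ≤ i ∧ i ≤ m := by
  simp [winJ, Finset.mem_Icc]

theorem windecomp (n : ℕ) (hn : 1 ≤ n) (m : ℕ) (S : Set ({ i : ℤ // i ∈ winJ m } → Fin n)) :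
    winproj n m ⁻¹' S = ⋃ g ∈ (Set.toFinite S).toFinset, cylS n (-(m:ℤ)) m (extS n hn m g) := by
  ext ω
  simp only [Set.mem_preimage, Set.mem_iUnion, Set.Finite.mem_toFinset]
  constructor
  · intro h
    refine ⟨winproj n m ω, h, ?_⟩
    intro i h1 h2
    have hi : i ∈ winJ m := (mem_winJ m i).2 ⟨h1, h2⟩
    simp [extS, hi, winproj]
  · rintro ⟨g, hg, hω⟩
    have : winproj n m ω = g := by
      funext i
      have hi := i.2
      rw [mem_winJ] at hi
      have := hω i.1 hi.1 hi.2
      simpa [extS, winproj, i.2] using this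
    rwa [this]

theorem windisj (n : ℕ) (hn : 1 ≤ n) (m : ℕ) (g g' : { i : ℤ // i ∈ winJ m } → Fin n)
    (hgg : g ≠ g') : Disjoint (cylS n (-(m:ℤ)) m (extS n hn m g)) (cylS n (-(m:ℤ)) m (extS n hn m g')) := by
  rw [Set.disjoint_left]
  intro ω h1 h2
  refine hgg (funext fun i => ?_)
  have hi := i.2
  rw [mem_winJ] at hi
  have e1 := h1 i.1 hi.1 hi.2
  have e2 := h2 i.1 hi.1 hi.2
  rw [e1] at e2
  simpa [extS, i.2] using e2

theorem winmeasure (n : ℕ) (hn : 1 ≤ n) (m : ℕ) (μ : Measure (ℤ → Fin n))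
    (S : Set ({ i : ℤ // i ∈ winJ m } → Fin n)) :
    μ (winproj n m ⁻¹' S) = ∑ g ∈ (Set.toFinite S).toFinset, μ (cylS n (-(m:ℤ)) m (extS n hn m g)) := by
  rw [windecomp n hn m S]
  refine measure_biUnion_finset ?_ fun g _ => cylS_meas n _ _ _
  intro g hg g' hg' hgg
  exact windisj n hn m g g' hgg

theorem pairbound (n : ℕ) (hn : 1 ≤ n) (P : Matrix (Fin n) (Fin n) ℝ) (v : Fin n → ℝ)
    (μ : Measure (ℤ → Fin n))
    (hcyl : ∀ n₂ n₁ : ℤ, n₂ ≤ n₁ → ∀ w : ℤ → Fin n,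
      μ {ω | ∀ i : ℤ, n₂ ≤ i → i ≤ n₁ → ω i = w i} =
        ENNReal.ofReal (v (w n₂) * ∏ i ∈ Finset.Ico n₂ n₁, P (w i) (w (i + 1))))
    (hvpos : ∀ i, 0 < v i) (hvsum : ∑ i, v i = 1) (hPnonneg : ∀ i j, 0 ≤ P i j)
    (p : ℕ) (hp : 1 ≤ p) (δ : ℝ) (hδ0 : 0 ≤ δ)
    (hδ : ∀ m, p ≤ m → ∀ i j, δ ≤ (P ^ m) i j)
    (m m' k : ℕ) (hk : p + m + m' ≤ k)
    (g : { i : ℤ // i ∈ winJ m } → Fin n) (g' : { i : ℤ // i ∈ winJ m' } → Fin n) :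
    ENNReal.ofReal δ * μ (cylS n (-(m:ℤ)) m (extS n hn m g)) *
        μ (cylS n (-(m':ℤ)) m' (extS n hn m' g')) ≤
      μ (cylS n (-(m:ℤ)) m (extS n hn m g) ∩
        (shT n)^[k] ⁻¹' cylS n (-(m':ℤ)) m' (extS n hn m' g')) := by
  have hvle : ∀ j, v j ≤ 1 := by
    intro j
    rw [← hvsum]
    exact Finset.single_le_sum (fun i _ => (hvpos i).le) (Finset.mem_univ j)
  set u : ℤ → Fin n := extS n hn m g with hu
  set w' : ℤ → Fin n := extS n hn m' g' with hw'
  set mm : ℕ := k - m - m' with hmm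
  have hmm1 : 1 ≤ mm := by omega
  have hmmp : p ≤ mm := by omega
  set x : ℝ := v (u (-(m:ℤ))) * ∏ i ∈ Finset.Ico (-(m:ℤ)) m, P (u i) (u (i+1)) with hx
  set y : ℝ := v (w' (-(m':ℤ))) * ∏ i ∈ Finset.Ico (-(m':ℤ)) m', P (w' i) (w' (i+1)) with hy
  have hx0 : 0 ≤ x := mul_nonneg (hvpos _).le (Finset.prod_nonneg fun i _ => hPnonneg _ _)
  have hy0 : 0 ≤ y := mul_nonneg (hvpos _).le (Finset.prod_nonneg fun i _ => hPnonneg _ _)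
  have hμC : μ (cylS n (-(m:ℤ)) m u) = ENNReal.ofReal x := hcyl _ _ (by omega) u
  have hμC' : μ (cylS n (-(m':ℤ)) m' w') = ENNReal.ofReal y := hcyl _ _ (by omega) w'
  rw [shT_iter_cyl]
  have hbc : (-(m':ℤ) + (k:ℤ)) = (m:ℤ) + (mm:ℤ) := by push_cast [hmm]; omega
  rw [hbc]
  have htb := twoblock n P v μ hcyl hvpos hPnonneg mm hmm1 (-(m:ℤ)) m (by omega)
    ((m':ℤ) + (k:ℤ)) (by push_cast [hmm]; omega) u (fun i => w' (i - k))
  rw [htb]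
  -- simplify the RHS real expression
  have hwc : w' ((m:ℤ) + (mm:ℤ) - (k:ℤ)) = w' (-(m':ℤ)) := by
    congr 1; push_cast [hmm]; omega
  have hprod : ∏ i ∈ Finset.Ico ((m:ℤ) + (mm:ℤ)) ((m':ℤ) + (k:ℤ)),
      P (w' (i - k)) (w' (i + 1 - k)) =
      ∏ i ∈ Finset.Ico (-(m':ℤ)) (m':ℤ), P (w' i) (w' (i+1)) := by
    rw [show ((m:ℤ) + (mm:ℤ)) = -(m':ℤ) + (k:ℤ) from hbc.symm,
      show ((m':ℤ) + (k:ℤ)) = (m':ℤ) + (k:ℤ) from rfl,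
      ← Finset.map_add_right_Ico (-(m':ℤ)) (m':ℤ) (k:ℤ), Finset.prod_map]
    refine Finset.prod_congr rfl fun i _ => ?_
    simp only [addRightEmbedding_apply]
    congr 1
    · congr 1; ring
    · congr 1; ring
  calc ENNReal.ofReal δ * μ (cylS n (-(m:ℤ)) m u) * μ (cylS n (-(m':ℤ)) m' w')
      = ENNReal.ofReal (x * (δ * y)) := by
        rw [hμC, hμC', ← ENNReal.ofReal_mul hδ0, ← ENNReal.ofReal_mul (mul_nonneg hδ0 hx0)]
        congr 1
        ring
    _ ≤ ENNReal.ofReal ((v (u (-(m:ℤ))) * ∏ i ∈ Finset.Ico (-(m:ℤ)) m, P (u i) (u (i + 1))) *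
          ((P ^ mm) (u m) ((fun i => w' (i - k)) ((m:ℤ) + (mm:ℤ))) *
            ∏ i ∈ Finset.Ico ((m:ℤ) + (mm:ℤ)) ((m':ℤ) + (k:ℤ)),
              P ((fun i => w' (i - k)) i) ((fun i => w' (i - k)) (i + 1)))) := by
        refine ENNReal.ofReal_le_ofReal ?_
        simp only
        rw [hwc, hprod, ← hx]
        refine mul_le_mul_of_nonneg_left ?_ hx0
        rw [hy]
        have h1 : δ * (v (w' (-(m':ℤ))) * ∏ i ∈ Finset.Ico (-(m':ℤ)) (m':ℤ), P (w' i) (w' (i+1)))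
            ≤ (P ^ mm) (u m) (w' (-(m':ℤ))) * ∏ i ∈ Finset.Ico (-(m':ℤ)) (m':ℤ), P (w' i) (w' (i+1)) := by
          rw [← mul_assoc]
          refine mul_le_mul_of_nonneg_right ?_ (Finset.prod_nonneg fun i _ => hPnonneg _ _)
          calc δ * v (w' (-(m':ℤ))) ≤ δ * 1 := mul_le_mul_of_nonneg_left (hvle _) hδ0
            _ = δ := mul_one δ
            _ ≤ (P ^ mm) (u m) (w' (-(m':ℤ))) := hδ mm hmmp _ _
        exact h1
  -- done? no: need to match the exact expression; the μ side is the twoblock RHS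

theorem mixing (n : ℕ) (hn : 1 ≤ n) (P : Matrix (Fin n) (Fin n) ℝ) (v : Fin n → ℝ)
    (μ : Measure (ℤ → Fin n))
    (hcyl : ∀ n₂ n₁ : ℤ, n₂ ≤ n₁ → ∀ w : ℤ → Fin n,
      μ {ω | ∀ i : ℤ, n₂ ≤ i → i ≤ n₁ → ω i = w i} =
        ENNReal.ofReal (v (w n₂) * ∏ i ∈ Finset.Ico n₂ n₁, P (w i) (w (i + 1))))
    (hvpos : ∀ i, 0 < v i) (hvsum : ∑ i, v i = 1) (hPnonneg : ∀ i j, 0 ≤ P i j)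
    (p : ℕ) (hp : 1 ≤ p) (δ : ℝ) (hδ0 : 0 ≤ δ)
    (hδ : ∀ m, p ≤ m → ∀ i j, δ ≤ (P ^ m) i j)
    (m m' : ℕ) (S : Set ({ i : ℤ // i ∈ winJ m } → Fin n))
    (S' : Set ({ i : ℤ // i ∈ winJ m' } → Fin n)) (k : ℕ) (hk : p + m + m' ≤ k) :
    ENNReal.ofReal δ * μ (winproj n m ⁻¹' S) * μ (winproj n m' ⁻¹' S') ≤
      μ (winproj n m ⁻¹' S ∩ (shT n)^[k] ⁻¹' (winproj n m' ⁻¹' S')) := by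
  classical
  set 𝒮 := (Set.toFinite S).toFinset with h𝒮
  set 𝒮' := (Set.toFinite S').toFinset with h𝒮'
  set C : ({ i : ℤ // i ∈ winJ m } → Fin n) → Set (ℤ → Fin n) :=
    fun g => cylS n (-(m:ℤ)) m (extS n hn m g) with hC
  set C' : ({ i : ℤ // i ∈ winJ m' } → Fin n) → Set (ℤ → Fin n) :=
    fun g => cylS n (-(m':ℤ)) m' (extS n hn m' g) with hC'
  have hunion : winproj n m ⁻¹' S ∩ (shT n)^[k] ⁻¹' (winproj n m' ⁻¹' S') =
      ⋃ q ∈ 𝒮 ×ˢ 𝒮', (C q.1 ∩ (shT n)^[k] ⁻¹' C' q.2) := by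
    rw [windecomp n hn m S, windecomp n hn m' S']
    ext ω
    simp only [Set.mem_inter_iff, Set.mem_iUnion, Set.mem_preimage, Finset.mem_product,
      exists_prop, ← h𝒮, ← h𝒮', ← hC, ← hC']
    constructor
    · rintro ⟨⟨g, hg, hω⟩, g', hg', hω'⟩
      exact ⟨(g, g'), ⟨hg, hg'⟩, hω, hω'⟩
    · rintro ⟨q, ⟨hq1, hq2⟩, hω, hω'⟩
      exact ⟨⟨q.1, hq1, hω⟩, ⟨q.2, hq2, hω'⟩⟩
  rw [hunion]
  have hmeas : ∀ q ∈ 𝒮 ×ˢ 𝒮', MeasurableSet (C q.1 ∩ (shT n)^[k] ⁻¹' C' q.2) :=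
    fun q _ => (cylS_meas n _ _ _).inter (((shT_meas n).iterate k) (cylS_meas n _ _ _))
  have hdisj : Set.PairwiseDisjoint (↑(𝒮 ×ˢ 𝒮') : Set (({ i : ℤ // i ∈ winJ m } → Fin n) × ({ i : ℤ // i ∈ winJ m' } → Fin n)))
      (fun q => C q.1 ∩ (shT n)^[k] ⁻¹' C' q.2) := by
    intro q _ q' _ hqq
    by_cases h1 : q.1 = q'.1
    · have h2 : q.2 ≠ q'.2 := fun h => hqq (Prod.ext h1 h)
      have := (windisj n hn m' q.2 q'.2 h2).preimage ((shT n)^[k])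
      exact Disjoint.mono Set.inter_subset_right Set.inter_subset_right this
    · have := windisj n hn m q.1 q'.1 h1
      exact Disjoint.mono Set.inter_subset_left Set.inter_subset_left this
  rw [measure_biUnion_finset hdisj hmeas]
  calc ENNReal.ofReal δ * μ (winproj n m ⁻¹' S) * μ (winproj n m' ⁻¹' S')
      = ∑ g ∈ 𝒮, ∑ g' ∈ 𝒮', ENNReal.ofReal δ * μ (C g) * μ (C' g') := by
        rw [winmeasure n hn m μ S, winmeasure n hn m' μ S', ← h𝒮, ← h𝒮']
        rw [mul_assoc, Finset.sum_mul_sum, Finset.mul_sum]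
        refine Finset.sum_congr rfl fun g _ => ?_
        rw [Finset.mul_sum]
        refine Finset.sum_congr rfl fun g' _ => ?_
        rw [mul_assoc]
    _ = ∑ q ∈ 𝒮 ×ˢ 𝒮', ENNReal.ofReal δ * μ (C q.1) * μ (C' q.2) := by
        rw [Finset.sum_product]
    _ ≤ ∑ q ∈ 𝒮 ×ˢ 𝒮', μ (C q.1 ∩ (shT n)^[k] ⁻¹' C' q.2) := by
        refine Finset.sum_le_sum fun q _ => ?_
        exact pairbound n hn P v μ hcyl hvpos hvsum hPnonneg p hp δ hδ0 hδ m m' k hk q.1 q.2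
/-- if all entries of `A ^ p` are positive for some `p ≥ 1`, then the left
shift is ergodic with respect to the two-sided Markov measure `μ_P`. -/
theorem stmt2 (n : ℕ) (hn : 1 ≤ n)
    (A P : Matrix (Fin n) (Fin n) ℝ)
    (hA : ∀ i j, A i j = 0 ∨ A i j = 1)
    (p : ℕ) (hp : 1 ≤ p) (hAp : ∀ i j, 0 < (A ^ p) i j)
    (hPnonneg : ∀ i j, 0 ≤ P i j)
    (hProw : ∀ i, ∑ j, P i j = 1)
    (hPA : ∀ i j, 0 < P i j ↔ A i j = 1)
    (v : Fin n → ℝ)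
    (hvpos : ∀ i, 0 < v i)
    (hvsum : ∑ i, v i = 1)
    (hvstat : ∀ j, ∑ i, v i * P i j = v j)
    (μ : Measure (ℤ → Fin n)) (hprob : IsProbabilityMeasure μ)
    (hinv : ∀ s : Set (ℤ → Fin n), MeasurableSet s →
      μ ((fun ω (i : ℤ) => ω (i + 1)) ⁻¹' s) = μ s)
    (hcyl : ∀ n₂ n₁ : ℤ, n₂ ≤ n₁ → ∀ w : ℤ → Fin n,
      μ {ω | ∀ i : ℤ, n₂ ≤ i → i ≤ n₁ → ω i = w i} =
        ENNReal.ofReal (v (w n₂) * ∏ i ∈ Finset.Ico n₂ n₁, P (w i) (w (i + 1)))) :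
    ∀ B : Set (ℤ → Fin n), MeasurableSet B →
      (fun ω (i : ℤ) => ω (i + 1)) ⁻¹' B = B → μ B = 0 ∨ μ B = 1 := by
  classical
  -- the uniform lower bound δ
  obtain ⟨q0, -, hq0⟩ := Finset.exists_min_image Finset.univ
    (fun q : Fin n × Fin n => (P ^ p) q.1 q.2)
    ⟨(⟨0, hn⟩, ⟨0, hn⟩), Finset.mem_univ _⟩
  set δ : ℝ := (P ^ p) q0.1 q0.2 with hδdef
  have hδpos : 0 < δ := powpos n A P hA hPnonneg hPA p q0.1 q0.2 (hAp q0.1 q0.2)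
  have hδle : ∀ i j, δ ≤ (P ^ p) i j := fun i j => hq0 (i, j) (Finset.mem_univ _)
  have hδ : ∀ m, p ≤ m → ∀ i j, δ ≤ (P ^ m) i j :=
    powge n P hPnonneg hProw p δ hδle
  -- measure-dense approximation by the window algebra
  have hdense : μ.MeasureDense (winalg n) :=
    Measure.MeasureDense.of_generateFrom_isSetAlgebra_finite μ
      (winalg_isSetAlgebra n) (winalg_generate n)
  intro B hB hBinv
  by_contra hcon
  push_neg at hcon
  obtain ⟨h0, h1⟩ := hcon
  -- invariance of B and Bᶜ under the iterates
  have hBinv' : shT n ⁻¹' B = B := hBinv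
  have hBcinv : shT n ⁻¹' Bᶜ = Bᶜ := by
    rw [Set.preimage_compl, hBinv']
  have hiterBc : ∀ k : ℕ, (shT n)^[k] ⁻¹' Bᶜ = Bᶜ := by
    intro k
    induction k with
    | zero => simp
    | succ k ih => rw [Function.iterate_succ, Set.preimage_comp, ih, hBcinv]
  -- basic facts about β
  have hμBne : μ B ≠ ⊤ := measure_ne_top μ B
  set β : ℝ := (μ B).toReal with hβ
  have hβpos : 0 < β := ENNReal.toReal_pos h0 hμBne
  have hμBlt : μ B < 1 := lt_of_le_of_ne prob_le_one h1
  have hβlt : β < 1 := by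
    have := ENNReal.toReal_lt_toReal hμBne (by norm_num : (1 : ENNReal) ≠ ⊤) |>.2 hμBlt
    simpa using this
  have hμB : μ B = ENNReal.ofReal β := (ENNReal.ofReal_toReal hμBne).symm
  have hμBc : μ Bᶜ = ENNReal.ofReal (1 - β) := by
    rw [measure_compl hB hμBne, measure_univ, hμB,
      ← ENNReal.ofReal_one, ← ENNReal.ofReal_sub _ (le_of_lt hβpos)]
  -- choose ε
  set ε : ℝ := min (β/2) (min ((1-β)/2) (δ*β*(1-β)/8)) with hε
  have hεpos : 0 < ε := by
    refine lt_min (by linarith) (lt_min (by linarith) ?_)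
    have : 0 < δ*β*(1-β) := mul_pos (mul_pos hδpos hβpos) (by linarith : (0:ℝ) < 1-β)
    linarith
  have hε1 : ε ≤ β/2 := min_le_left _ _
  have hε2 : ε ≤ (1-β)/2 := le_trans (min_le_right _ _) (min_le_left _ _)
  have hε3 : ε ≤ δ*β*(1-β)/8 := le_trans (min_le_right _ _) (min_le_right _ _)
  -- approximations
  obtain ⟨E, hEalg, hEapprox⟩ := hdense.approx B hB hμBne ε hεpos
  obtain ⟨F, hFalg, hFapprox⟩ := hdense.approx Bᶜ hB.compl (measure_ne_top μ Bᶜ) ε hεpos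
  have hEmeas : MeasurableSet E := winalg_meas n E hEalg
  have hFmeas : MeasurableSet F := winalg_meas n F hFalg
  obtain ⟨mE, SE, hEeq⟩ := hEalg
  obtain ⟨mF, SF, hFeq⟩ := hFalg
  set k : ℕ := p + mE + mF with hk
  -- upper bound on μ (E ∩ shT^[k] ⁻¹' F)
  have hsubset : E ∩ (shT n)^[k] ⁻¹' F ⊆ (E \ B) ∪ (shT n)^[k] ⁻¹' (F \ Bᶜ) := by
    intro ω ⟨hEω, hFω⟩
    by_cases hBω : ω ∈ B
    · refine Or.inr ⟨hFω, fun hcc => ?_⟩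
      have : ω ∈ (shT n)^[k] ⁻¹' Bᶜ := hcc
      rw [hiterBc k] at this
      exact this hBω
    · exact Or.inl ⟨hEω, hBω⟩
  have hupper : μ (E ∩ (shT n)^[k] ⁻¹' F) < ENNReal.ofReal (ε + ε) := by
    calc μ (E ∩ (shT n)^[k] ⁻¹' F) ≤ μ ((E \ B) ∪ (shT n)^[k] ⁻¹' (F \ Bᶜ)) :=
          measure_mono hsubset
      _ ≤ μ (E \ B) + μ ((shT n)^[k] ⁻¹' (F \ Bᶜ)) := measure_union_le _ _
      _ = μ (E \ B) + μ (F \ Bᶜ) := by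
          rw [shT_iter_inv n μ hinv k (F \ Bᶜ) (hFmeas.diff hB.compl)]
      _ ≤ μ (B ∆ E) + μ (Bᶜ ∆ F) := by
          refine add_le_add (measure_mono ?_) (measure_mono ?_)
          · exact fun ω hω => Or.inr hω
          · exact fun ω hω => Or.inr hω
      _ < ENNReal.ofReal ε + ENNReal.ofReal ε := ENNReal.add_lt_add hEapprox hFapprox
      _ = ENNReal.ofReal (ε + ε) := (ENNReal.ofReal_add hεpos.le hεpos.le).symm
  -- lower bounds on μ E and μ F
  have hElow : ENNReal.ofReal (β - ε) ≤ μ E := by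
    have hub : μ B ≤ μ E + ENNReal.ofReal ε := by
      calc μ B ≤ μ (E ∪ B ∆ E) := measure_mono (fun ω hω => by
            by_cases hE : ω ∈ E
            · exact Or.inl hE
            · exact Or.inr (Or.inl ⟨hω, hE⟩))
        _ ≤ μ E + μ (B ∆ E) := measure_union_le _ _
        _ ≤ μ E + ENNReal.ofReal ε := add_le_add le_rfl hEapprox.le
    rw [ENNReal.ofReal_sub _ hεpos.le, ← hμB]
    exact tsub_le_iff_right.2 hub
  have hFlow : ENNReal.ofReal (1 - β - ε) ≤ μ F := by
    have hub : μ Bᶜ ≤ μ F + ENNReal.ofReal ε := by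
      calc μ Bᶜ ≤ μ (F ∪ Bᶜ ∆ F) := measure_mono (fun ω hω => by
            by_cases hF : ω ∈ F
            · exact Or.inl hF
            · exact Or.inr (Or.inl ⟨hω, hF⟩))
        _ ≤ μ F + μ (Bᶜ ∆ F) := measure_union_le _ _
        _ ≤ μ F + ENNReal.ofReal ε := add_le_add le_rfl hFapprox.le
    rw [ENNReal.ofReal_sub _ hεpos.le, ← hμBc]
    exact tsub_le_iff_right.2 hub
  -- the mixing lower bound
  have hmix : ENNReal.ofReal δ * μ E * μ F ≤ μ (E ∩ (shT n)^[k] ⁻¹' F) := by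
    rw [hEeq, hFeq]
    exact mixing n hn P v μ hcyl hvpos hvsum hPnonneg p hp δ hδpos.le hδ mE mF SE SF k le_rfl
  -- real arithmetic: δ (β-ε)(1-β-ε) ≥ 2ε
  have harith : ε + ε ≤ δ * (β - ε) * (1 - β - ε) := by
    have h1 : β/2 ≤ β - ε := by linarith
    have h2 : (1-β)/2 ≤ 1 - β - ε := by linarith
    have h3 : δ * (β/2) * ((1-β)/2) ≤ δ * (β - ε) * (1 - β - ε) := by
      refine mul_le_mul (mul_le_mul le_rfl h1 (by linarith) hδpos.le) h2 (by linarith) ?_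
      exact mul_nonneg hδpos.le (by linarith)
    have h4 : ε + ε ≤ δ*β*(1-β)/4 := by linarith
    calc ε + ε ≤ δ*β*(1-β)/4 := h4
      _ = δ * (β/2) * ((1-β)/2) := by ring
      _ ≤ δ * (β - ε) * (1 - β - ε) := h3
  -- contradiction
  have hchain : ENNReal.ofReal (ε + ε) ≤ μ (E ∩ (shT n)^[k] ⁻¹' F) := by
    calc ENNReal.ofReal (ε + ε) ≤ ENNReal.ofReal (δ * (β - ε) * (1 - β - ε)) :=
          ENNReal.ofReal_le_ofReal harith
      _ = ENNReal.ofReal δ * ENNReal.ofReal (β - ε) * ENNReal.ofReal (1 - β - ε) := by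
          rw [← ENNReal.ofReal_mul hδpos.le, ← ENNReal.ofReal_mul (by nlinarith : 0 ≤ δ * (β - ε))]
      _ ≤ ENNReal.ofReal δ * μ E * μ F := by
          exact mul_le_mul' (mul_le_mul' le_rfl hElow) hFlow
      _ ≤ μ (E ∩ (shT n)^[k] ⁻¹' F) := hmix
  exact absurd (lt_of_le_of_lt hchain hupper) (lt_irrefl _)
end

section
/- Let 0 < θ < 1, c > 0, and let G : {1,…,n}^ℤ → ℝ satisfy the Hölder-type condition: |G(ω) − G(ω′)| ≤ c·θ^m whenever ω_i = ω′_i for all integers i with |i| < m. Then there exists a constant K > 0 such that for every N ∈ ℕ and all ω, ω′ ∈ {1,…,n}^ℤ with ω_i = ω′_i for all i ≤ −1, one has |∑_{k=1}^{N} G(σ^{−k}(ω)) − ∑_{k=1}^{N} G(σ^{−k}(ω′))| < K, where σ^{−k} denotes the k-th iterate of the inverse of the left shift. -/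
lemma iter_shift {α : Type*} (k : ℕ) (ω : ℤ → α) (i : ℤ) :
    ((fun ν (i : ℤ) => ν (i - 1))^[k] ω) i = ω (i - k) := by
  induction k generalizing i with
  | zero => simp
  | succ k ih =>
    rw [Function.iterate_succ_apply']
    simp only [ih]
    congr 1
    push_cast
    ring

/-- a Hölder-type function on the two-sided shift has uniformly bounded
differences of Birkhoff sums for the inverse shift over points agreeing on negative
coordinates. -/
theorem stmt4 (n : ℕ) (hn : 1 ≤ n) (θ c : ℝ) (hθ0 : 0 < θ) (hθ1 : θ < 1) (hc : 0 < c)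
    (G : (ℤ → Fin n) → ℝ)
    (hG : ∀ m : ℕ, ∀ ω ω' : ℤ → Fin n,
      (∀ i : ℤ, |i| < (m : ℤ) → ω i = ω' i) → |G ω - G ω'| ≤ c * θ ^ m) :
    ∃ K : ℝ, 0 < K ∧ ∀ N : ℕ, ∀ ω ω' : ℤ → Fin n,
      (∀ i : ℤ, i ≤ -1 → ω i = ω' i) →
      |(∑ k ∈ Finset.Icc 1 N, G ((fun ν (i : ℤ) => ν (i - 1))^[k] ω)) -
        ∑ k ∈ Finset.Icc 1 N, G ((fun ν (i : ℤ) => ν (i - 1))^[k] ω')| < K := by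
  have h1θ : 0 < 1 - θ := by linarith
  refine ⟨c / (1 - θ) + 1, by positivity, ?_⟩
  intro N ω ω' hagree
  rw [← Finset.sum_sub_distrib]
  calc |∑ k ∈ Finset.Icc 1 N,
        (G ((fun ν (i : ℤ) => ν (i - 1))^[k] ω) - G ((fun ν (i : ℤ) => ν (i - 1))^[k] ω'))|
      ≤ ∑ k ∈ Finset.Icc 1 N,
        |G ((fun ν (i : ℤ) => ν (i - 1))^[k] ω) - G ((fun ν (i : ℤ) => ν (i - 1))^[k] ω')| :=
        Finset.abs_sum_le_sum_abs _ _
    _ ≤ ∑ k ∈ Finset.Icc 1 N, c * θ ^ k := by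
        apply Finset.sum_le_sum
        intro k _
        apply hG
        intro i hi
        rw [iter_shift, iter_shift]
        apply hagree
        have : i < (k : ℤ) := lt_of_abs_lt hi
        omega
    _ ≤ ∑ k ∈ Finset.range (N + 1), c * θ ^ k := by
        apply Finset.sum_le_sum_of_subset_of_nonneg
        · intro k hk
          simp only [Finset.mem_Icc] at hk
          simp only [Finset.mem_range]
          omega
        · intro k _ _; positivity
    _ = c * ∑ k ∈ Finset.range (N + 1), θ ^ k := by rw [Finset.mul_sum]
    _ ≤ c * (1 / (1 - θ)) := by
        apply mul_le_mul_of_nonneg_left _ hc.le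
        rw [geom_sum_eq (by linarith : θ ≠ 1),
          show (θ ^ (N + 1) - 1) / (θ - 1) = (1 - θ ^ (N + 1)) / (1 - θ) by
            rw [← neg_div_neg_eq]; ring_nf]
        have : 0 < θ ^ (N + 1) := pow_pos hθ0 _
        gcongr
        linarith
    _ < c / (1 - θ) + 1 := by rw [mul_one_div]; linarith
end

section
/- Let X be a metric space, s > 0, and let m be a finite Borel measure on X such that for m-almost every x ∈ X, limsup_{ε→0⁺} m(B(x,ε))/ε^s = ∞, where B(x,ε) denotes the closed ball of radius ε centered at x. Then m is singular with respect to the s-dimensional Hausdorff measure H^s on X, i.e. there exists a Borel set A ⊆ X with m(X∖A) = 0 and H^s(A) = 0. -/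
open MeasureTheory Metric Filter
open scoped ENNReal NNReal Topology

/-- if the upper `s`-density of a finite Borel measure is infinite almost
everywhere, then the measure is singular with respect to the `s`-dimensional Hausdorff
measure. -/
theorem stmt7 {X : Type*} [MetricSpace X] [MeasurableSpace X] [BorelSpace X]
    (s : ℝ) (hs : 0 < s) (m : Measure X) [IsFiniteMeasure m]
    (h : ∀ᵐ x ∂m,
      Filter.limsup (fun ε : ℝ => m (closedBall x ε) / ENNReal.ofReal (ε ^ s))
        (nhdsWithin 0 (Set.Ioi 0)) = ⊤) :
    ∃ A : Set X, MeasurableSet A ∧ m Aᶜ = 0 ∧ μH[s] A = 0 := by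
  classical
  set E : Set X := {x | Filter.limsup
      (fun ε : ℝ => m (closedBall x ε) / ENNReal.ofReal (ε ^ s))
      (nhdsWithin 0 (Set.Ioi 0)) = ⊤} with hEdef
  have hmE : m Eᶜ = 0 := by
    simpa [hEdef, Set.compl_setOf] using (ae_iff.mp h)
  set C : ℝ≥0∞ := ENNReal.ofReal (8 ^ s) * m Set.univ with hCdef
  have hCtop : C ≠ ⊤ := by
    exact ENNReal.mul_ne_top ENNReal.ofReal_ne_top (measure_ne_top m _)
  -- main estimate: for every finite positive `T`, `μH[s] E ≤ C / T`
  have main : ∀ T : ℝ≥0∞, 0 < T → T ≠ ⊤ → μH[s] E ≤ C / T := by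
    intro T hT0 hTtop
    -- For each `δ > 0`, produce a countable cover of `E` by balls of radius `≤ 4δ`
    -- whose `s`-dimensional sum is at most `C / T`.
    have cov : ∀ δ : ℝ, ∃ U : Set (X × ℝ), U.Countable ∧ (0 < δ →
        ((∀ p ∈ U, 0 < p.2 ∧ p.2 ≤ δ) ∧
        (E ⊆ ⋃ p ∈ U, closedBall p.1 (4 * p.2)) ∧
        ∑' p : U, EMetric.diam (closedBall (p : X × ℝ).1 (4 * (p : X × ℝ).2)) ^ s
          ≤ C / T)) := by
      intro δ
      rcases le_or_gt δ 0 with hδ | hδ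
      · exact ⟨∅, Set.countable_empty, fun h0 => absurd h0 (not_lt.mpr hδ)⟩
      · set F : Set (X × ℝ) := {p | p.1 ∈ E ∧ 0 < p.2 ∧ p.2 ≤ δ ∧
          T * ENNReal.ofReal (p.2 ^ s) ≤ m (closedBall p.1 p.2)} with hFdef
        have hF : ∀ x ∈ E, ∃ ε : ℝ, (x, ε) ∈ F := by
          intro x hx
          have hfr : ∃ᶠ ε in nhdsWithin (0 : ℝ) (Set.Ioi 0),
              T < m (closedBall x ε) / ENNReal.ofReal (ε ^ s) := by
            apply frequently_lt_of_lt_limsup (by isBoundedDefault)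
            rw [hx]
            exact hTtop.lt_top
          have hev : ∀ᶠ ε in nhdsWithin (0 : ℝ) (Set.Ioi 0), 0 < ε ∧ ε ≤ δ := by
            filter_upwards [self_mem_nhdsWithin,
              (gt_mem_nhds hδ).filter_mono nhdsWithin_le_nhds] with ε h1 h2
            exact ⟨h1, h2.le⟩
          obtain ⟨ε, hlt, hε0, hεδ⟩ := (hfr.and_eventually hev).exists
          refine ⟨ε, hx, hε0, hεδ, ?_⟩
          have hpos : (0 : ℝ) < ε ^ s := Real.rpow_pos_of_pos hε0 s
          have h0 : ENNReal.ofReal (ε ^ s) ≠ 0 := by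
            simp [ENNReal.ofReal_eq_zero, not_le, hpos]
          exact (ENNReal.le_div_iff_mul_le (Or.inl h0)
            (Or.inl ENNReal.ofReal_ne_top)).mp hlt.le
        obtain ⟨u, uF, u_disj, hu⟩ :=
          Vitali.exists_disjoint_subfamily_covering_enlargement_closedBall F
            Prod.fst Prod.snd δ (fun p hp => hp.2.2.1) 4 (by norm_num)
        -- each ball in `u` has positive measure
        have hposmeas : ∀ p ∈ u, 0 < m (closedBall p.1 p.2) := by
          intro p hp
          have hpF := uF hp
          have hpos : (0 : ℝ) < p.2 ^ s := Real.rpow_pos_of_pos hpF.2.1 s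
          have : (0 : ℝ≥0∞) < T * ENNReal.ofReal (p.2 ^ s) := by
            apply ENNReal.mul_pos hT0.ne' (by simpa [ENNReal.ofReal_eq_zero, not_le] using hpos.not_ge)
          exact this.trans_le hpF.2.2.2
        have u_cnt : u.Countable := by
          have hdisj : Pairwise (Function.onFun Disjoint fun i : u =>
              closedBall (i : X × ℝ).1 (i : X × ℝ).2) := u_disj.subtype _ _
          have hcnt := MeasureTheory.Measure.countable_meas_pos_of_disjoint_iUnion
            (μ := m) (As := fun i : u => closedBall (i : X × ℝ).1 (i : X × ℝ).2)
            (fun i => measurableSet_closedBall) hdisj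
          have : {i : u | 0 < m (closedBall (i : X × ℝ).1 (i : X × ℝ).2)} = Set.univ := by
            ext i; simpa using hposmeas i i.2
          rw [this] at hcnt
          rw [← Set.countable_coe_iff]
          exact Set.countable_univ_iff.mp hcnt
        refine ⟨u, u_cnt, fun _ => ⟨fun p hp => ⟨(uF hp).2.1, (uF hp).2.2.1⟩, ?_, ?_⟩⟩
        · intro x hx
          obtain ⟨ε, hεF⟩ := hF x hx
          obtain ⟨b, hb, hsub⟩ := hu _ hεF
          exact Set.mem_biUnion hb (hsub (mem_closedBall_self hεF.2.1.le))
        · -- sum estimate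
          have hterm : ∀ p : u, EMetric.diam (closedBall (p : X × ℝ).1 (4 * (p : X × ℝ).2)) ^ s
              ≤ ENNReal.ofReal (8 ^ s) * (m (closedBall (p : X × ℝ).1 (p : X × ℝ).2) / T) := by
            rintro ⟨⟨x₀, r₀⟩, hpu⟩
            have hpF := uF hpu
            have hr0 : 0 < r₀ := hpF.2.1
            have hdiam : EMetric.diam (closedBall x₀ (4 * r₀)) ≤ ENNReal.ofReal (8 * r₀) := by
              apply EMetric.diam_le
              intro a ha b hb
              rw [edist_dist]
              apply ENNReal.ofReal_le_ofReal
              calc dist a b ≤ dist a x₀ + dist x₀ b := dist_triangle _ _ _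
                _ ≤ 4 * r₀ + 4 * r₀ := by
                    have hb' : dist b x₀ ≤ 4 * r₀ := hb
                    have ha' : dist a x₀ ≤ 4 * r₀ := ha
                    rw [dist_comm x₀ b]
                    linarith
                _ = 8 * r₀ := by ring
            calc EMetric.diam (closedBall x₀ (4 * r₀)) ^ s
                ≤ ENNReal.ofReal (8 * r₀) ^ s :=
                  ENNReal.rpow_le_rpow hdiam hs.le
              _ = ENNReal.ofReal ((8 * r₀) ^ s) := by
                  rw [← ENNReal.ofReal_rpow_of_pos (by linarith)]
              _ = ENNReal.ofReal (8 ^ s * r₀ ^ s) := by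
                  rw [Real.mul_rpow (by norm_num) hr0.le]
              _ = ENNReal.ofReal (8 ^ s) * ENNReal.ofReal (r₀ ^ s) := by
                  rw [ENNReal.ofReal_mul (Real.rpow_nonneg (by norm_num) s)]
              _ ≤ ENNReal.ofReal (8 ^ s) * (m (closedBall x₀ r₀) / T) := by
                  apply mul_le_mul_right
                  rw [ENNReal.le_div_iff_mul_le (Or.inl hT0.ne') (Or.inl hTtop)]
                  rw [mul_comm]
                  exact hpF.2.2.2
          calc ∑' p : u, EMetric.diam (closedBall (p : X × ℝ).1 (4 * (p : X × ℝ).2)) ^ s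
              ≤ ∑' p : u, ENNReal.ofReal (8 ^ s) *
                  (m (closedBall (p : X × ℝ).1 (p : X × ℝ).2) / T) :=
                ENNReal.tsum_le_tsum hterm
            _ = ENNReal.ofReal (8 ^ s) *
                  ((∑' p : u, m (closedBall (p : X × ℝ).1 (p : X × ℝ).2)) / T) := by
                rw [ENNReal.tsum_mul_left]
                congr 1
                simp only [div_eq_mul_inv, ENNReal.tsum_mul_right]
            _ = ENNReal.ofReal (8 ^ s) *
                  (m (⋃ p ∈ u, closedBall p.1 p.2) / T) := by
                rw [measure_biUnion u_cnt u_disj (fun p _ => measurableSet_closedBall)]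
            _ ≤ C / T := by
                rw [hCdef]
                simp only [div_eq_mul_inv, ← mul_assoc]
                exact mul_le_mul_left (mul_le_mul_right
                  (measure_mono (Set.subset_univ _)) _) _
    choose U hUc hU using cov
    haveI : ∀ δ : ℝ, Countable (U δ) := fun δ => (hUc δ).to_subtype
    have hmain := Measure.hausdorffMeasure_le_liminf_tsum s E
      (l := nhdsWithin (0 : ℝ) (Set.Ioi 0)) (ι := fun δ => ↥(U δ))
      (fun δ => ENNReal.ofReal (8 * δ))
      ?_ (fun δ p => closedBall (p : X × ℝ).1 (4 * (p : X × ℝ).2)) ?_ ?_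
    · refine hmain.trans ?_
      refine (liminf_le_limsup (by isBoundedDefault) (by isBoundedDefault)).trans ?_
      apply limsup_le_of_le (by isBoundedDefault)
      filter_upwards [self_mem_nhdsWithin] with δ hδ
      exact ((hU δ) hδ).2.2
    · -- tendsto of radii
      have : Tendsto (fun δ : ℝ => ENNReal.ofReal (8 * δ)) (nhds 0) (nhds 0) := by
        have := ENNReal.continuous_ofReal.tendsto (0 : ℝ)
        have h2 : Tendsto (fun δ : ℝ => 8 * δ) (nhds 0) (nhds 0) := by
          simpa using (continuous_mul_left (8:ℝ)).tendsto (0 : ℝ)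
        simpa only [ENNReal.ofReal_zero, Function.comp_def] using this.comp h2
      exact this.mono_left nhdsWithin_le_nhds
    · filter_upwards [self_mem_nhdsWithin] with δ hδ
      intro p
      have hp := ((hU δ) hδ).1 _ p.2
      apply (EMetric.diam_le ?_)
      intro a ha b hb
      rw [edist_dist]
      apply ENNReal.ofReal_le_ofReal
      have ha' : dist a (p : X × ℝ).1 ≤ 4 * (p : X × ℝ).2 := ha
      have hb' : dist b (p : X × ℝ).1 ≤ 4 * (p : X × ℝ).2 := hb
      calc dist a b ≤ dist a (p : X × ℝ).1 + dist (p : X × ℝ).1 b := dist_triangle _ _ _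
        _ ≤ 8 * δ := by rw [dist_comm (p : X × ℝ).1 b]; have := hp.2; nlinarith [hp.1]
    · filter_upwards [self_mem_nhdsWithin] with δ hδ
      intro x hx
      have := ((hU δ) hδ).2.1 hx
      simpa using this
  -- conclude `μH[s] E = 0`
  have key : μH[s] E = 0 := by
    by_contra ha
    have ha' : 0 < μH[s] E := pos_iff_ne_zero.mpr ha
    rcases eq_or_ne (μH[s] E) ⊤ with htop | hfin
    · have := main 1 one_pos ENNReal.one_ne_top
      rw [htop] at this
      simp at this
      exact hCtop this
    · have hdiv : C / μH[s] E ≠ ⊤ :=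
        (ENNReal.div_lt_top hCtop ha).ne
      obtain ⟨n, hn⟩ := ENNReal.exists_nat_gt hdiv
      have hn0 : 0 < (n : ℝ≥0∞) := lt_of_le_of_lt zero_le hn
      have h1 := main n hn0 (ENNReal.natCast_ne_top n)
      have h2 : C < (n : ℝ≥0∞) * μH[s] E := by
        rwa [ENNReal.div_lt_iff (Or.inl ha) (Or.inl hfin)] at hn
      have h3 : (n : ℝ≥0∞) * μH[s] E ≤ C := by
        rw [mul_comm]
        exact (ENNReal.le_div_iff_mul_le (Or.inl hn0.ne')
          (Or.inl (ENNReal.natCast_ne_top n))).mp h1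
      exact absurd h3 h2.not_ge
  refine ⟨toMeasurable (μH[s]) E, measurableSet_toMeasurable _ _, ?_, ?_⟩
  · refine le_antisymm (le_trans (measure_mono ?_) hmE.le) zero_le
    exact Set.compl_subset_compl.mpr (subset_toMeasurable _ _)
  · rw [measure_toMeasurable]
    exact key
end
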